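/- arXiv:1410.0297 — 12 statements merged into one kernel-verified Lean document; each statement's English description precedes it below -/
import Mathlib

section
/- Fix integers c ≥ 0 and b ≥ 2, and let m be a positive integer such that b^m > b^2 - 3b + 3 + c. Then for every positive integer a with a ≥ b^m, we have S_{[c,b]}(a) < a. -/
/-- The augmented generalized happy function `S_{[c,b]}`: it maps `a` to `c` plus the
sum of the squares of the base-`b` digits of `a`. -/
def S (c b a : ℕ) : ℕ := c + ((Nat.digits b a).map (· ^ 2)).sum

lemma T_rec (b a : ℕ) (hb : 2 ≤ b) (ha : 0 < a) :
    ((Nat.digits b a).map (· ^ 2)).sum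
      = (a % b) ^ 2 + ((Nat.digits b (a / b)).map (· ^ 2)).sum := by
  rw [Nat.digits_def' (by omega : 1 < b) ha]
  simp

lemma G_lem (b : ℕ) (hb : 2 ≤ b) : ∀ n q, b ^ n ≤ q →
    ((Nat.digits b q).map (· ^ 2)).sum + b ^ (n + 1) ≤ b * q + 1 := by
  intro n
  induction n with
  | zero =>
    intro q
    induction q using Nat.strong_induction_on with
    | _ q ih =>
      intro hq
      have hq1 : 0 < q := by simp at hq; omega
      rw [T_rec b q hb hq1]
      by_cases h : q < b
      · rw [Nat.mod_eq_of_lt h, Nat.div_eq_of_lt h]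
        simp only [Nat.digits_zero, List.map_nil, List.sum_nil, add_zero, pow_one,
          zero_add, pow_zero]
        zify
        have hfac : (0:ℤ) ≤ ((q:ℤ) - 1) * ((b:ℤ) - 1 - q) := by
          apply mul_nonneg <;> omega
        nlinarith [hfac]
      · push_neg at h
        have hq2 : 1 ≤ q / b := (Nat.one_le_div_iff (by omega)).mpr h
        have ihq := ih (q / b) (Nat.div_lt_self (by omega) (by omega)) (by simpa using hq2)
        have hr : q % b < b := Nat.mod_lt _ (by omega)
        have hdm : b * (q / b) + q % b = q := Nat.div_add_mod q b
        set t := ((Nat.digits b (q / b)).map (· ^ 2)).sum with ht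
        set r := q % b with hrd
        set q' := q / b with hqd
        simp only [zero_add, pow_one] at ihq ⊢
        zify at ihq hr hdm hq2 ⊢
        have h1 : (0:ℤ) ≤ (r:ℤ) * ((b:ℤ) - r) := by
          apply mul_nonneg <;> omega
        have h2 : (0:ℤ) ≤ (b:ℤ) * q' * ((b:ℤ) - 1) := by
          apply mul_nonneg
          · positivity
          · omega
        nlinarith [ihq, h1, h2, hdm, hr, hq2]
  | succ n ihn =>
    intro q hq
    have hbn : 0 < b ^ (n + 1) := Nat.pow_pos (by omega)
    have hq1 : 0 < q := lt_of_lt_of_le hbn hq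
    have hq2 : b ^ n ≤ q / b := by
      rw [Nat.le_div_iff_mul_le (by omega : 0 < b)]
      calc b ^ n * b = b ^ (n + 1) := by ring
        _ ≤ q := hq
    have ihq := ihn (q / b) hq2
    rw [T_rec b q hb hq1]
    have hr : q % b < b := Nat.mod_lt _ (by omega)
    have hdm : b * (q / b) + q % b = q := Nat.div_add_mod q b
    have hB : b ^ (n + 1) ≤ b * (q / b) := by
      calc b ^ (n + 1) = b * b ^ n := by ring
        _ ≤ b * (q / b) := Nat.mul_le_mul_left b hq2
    set t := ((Nat.digits b (q / b)).map (· ^ 2)).sum with ht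
    set r := q % b with hrd
    set q' := q / b with hqd
    zify at ihq hr hdm hB ⊢
    have h1 : (0:ℤ) ≤ (r:ℤ) * ((b:ℤ) - r) := by
      apply mul_nonneg <;> omega
    have h2 : (0:ℤ) ≤ ((b:ℤ) - 1) * ((b:ℤ) * q' - (b:ℤ) ^ (n + 1)) := by
      apply mul_nonneg
      · omega
      · linarith [hB]
    have hpow : ((b:ℤ)) ^ (n + 1 + 1) = (b:ℤ) ^ (n + 1) * b := by ring
    rw [hpow]
    nlinarith [ihq, h1, h2, hdm, hr]

theorem stmt_0 (c b m : ℕ) (hb : 2 ≤ b) (hm : 0 < m)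
    (hbm : (b : ℤ) ^ m > (b : ℤ) ^ 2 - 3 * b + 3 + c) :
    ∀ a : ℕ, 0 < a → b ^ m ≤ a → S c b a < a := by
  intro a ha hba
  have hq2 : b ^ (m - 1) ≤ a / b := by
    rw [Nat.le_div_iff_mul_le (by omega : 0 < b)]
    calc b ^ (m - 1) * b = b ^ m := by
          rw [← pow_succ]; congr 1; omega
      _ ≤ a := hba
  have hG := G_lem b hb (m - 1) (a / b) hq2
  rw [show m - 1 + 1 = m by omega] at hG
  rw [S, T_rec b a hb ha]
  have hr : a % b < b := Nat.mod_lt _ (by omega)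
  have hdm : b * (a / b) + a % b = a := Nat.div_add_mod a b
  set t := ((Nat.digits b (a / b)).map (· ^ 2)).sum with ht
  set r := a % b with hrd
  set q' := a / b with hqd
  zify at hG hr hdm ⊢
  have hfac : (0:ℤ) ≤ ((b:ℤ) - 1 - r) * ((b:ℤ) - 2 + r) := by
    apply mul_nonneg <;> omega
  nlinarith [hG, hr, hdm, hbm, hfac]
end

section
/- Fix integers c ≥ 0 and b ≥ 2. Every positive integer a is attracted to a periodic point of S_{[c,b]}: there exist an integer k ≥ 0 and a positive integer u with S_{[c,b]}^m(u) = u for some m ≥ 1, such that S_{[c,b]}^k(a) = u. -/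
-- digit-square sum is at most (b-1)*x
lemma sq_sum_le (b : ℕ) (hb : 2 ≤ b) : ∀ x : ℕ,
    ((Nat.digits b x).map (· ^ 2)).sum ≤ (b - 1) * x := by
  intro x
  induction x using Nat.strong_induction_on with
  | _ x ih =>
    rcases Nat.eq_zero_or_pos x with h | h
    · simp [h]
    · rw [Nat.digits_def' (by omega : 1 < b) h]
      simp only [List.map_cons, List.sum_cons]
      have hdiv := Nat.div_lt_self h (by omega : 1 < b)
      have h1 := ih (x / b) hdiv
      have h2 : x % b ≤ b - 1 := Nat.le_sub_one_of_lt (Nat.mod_lt _ (by omega))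
      have h3 : (x % b) ^ 2 ≤ (b - 1) * (x % b) := by
        rw [pow_two]; exact Nat.mul_le_mul_right _ h2
      have h4 : x % b + b * (x / b) = x := Nat.mod_add_div _ _
      have h5 : x / b ≤ b * (x / b) := Nat.le_mul_of_pos_left _ (by omega)
      calc (x % b) ^ 2 + ((Nat.digits b (x / b)).map (· ^ 2)).sum
          ≤ (b - 1) * (x % b) + (b - 1) * (x / b) := Nat.add_le_add h3 h1
        _ = (b - 1) * (x % b + x / b) := (Nat.mul_add _ _ _).symm
        _ ≤ (b - 1) * x := Nat.mul_le_mul_left _ (by omega)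

lemma sq_sum_le' (b : ℕ) (hb : 2 ≤ b) (x : ℕ) :
    ((Nat.digits b x).map (· ^ 2)).sum ≤ (b - 1) ^ 2 + (b - 1) * (x / b) := by
  rcases Nat.eq_zero_or_pos x with h | h
  · simp [h]
  · rw [Nat.digits_def' (by omega : 1 < b) h]
    simp only [List.map_cons, List.sum_cons]
    have h1 := sq_sum_le b hb (x / b)
    have h2 : x % b ≤ b - 1 := Nat.le_sub_one_of_lt (Nat.mod_lt _ (by omega))
    have h3 : (x % b) ^ 2 ≤ (b - 1) ^ 2 := Nat.pow_le_pow_left h2 2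
    omega

lemma S_pos (c b : ℕ) (hb : 2 ≤ b) {x : ℕ} (hx : 0 < x) : 0 < S c b x := by
  unfold S
  rcases Nat.eq_zero_or_pos c with rfl | hc
  · simp only [Nat.zero_add]
    by_contra h
    push_neg at h
    have hsum : ((Nat.digits b x).map (· ^ 2)).sum = 0 := by omega
    have hne : x ≠ 0 := hx.ne'
    have hnil : Nat.digits b x ≠ [] := Nat.digits_ne_nil_iff_ne_zero.2 hne
    have hlast := Nat.getLast_digit_ne_zero b hne
    have hmem : (Nat.digits b x).getLast hnil ∈ Nat.digits b x := List.getLast_mem hnil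
    have hmem2 : (Nat.digits b x).getLast hnil ^ 2 ∈ (Nat.digits b x).map (· ^ 2) :=
      List.mem_map_of_mem hmem
    have := (List.sum_eq_zero_iff.1 hsum) _ hmem2
    exact hlast (by nlinarith)
  · omega

-- decrease above N
lemma S_lt (c b : ℕ) (hb : 2 ≤ b) {x : ℕ}
    (hx : b * (c + (b - 1) ^ 2 + 1) ≤ x) : S c b x < x := by
  have hxpos : 0 < x := by nlinarith
  have h1 := sq_sum_le' b hb x
  have hq : c + (b - 1) ^ 2 + 1 ≤ x / b := (Nat.le_div_iff_mul_le (by omega)).2 (by nlinarith)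
  have h2 : b * (x / b) ≤ x := Nat.mul_div_le x b
  have h3 : (b - 1) * (x / b) + (x / b) = b * (x / b) := by
    obtain ⟨b', rfl⟩ : ∃ b', b = b' + 2 := ⟨b - 2, by omega⟩
    simp only [show b' + 2 - 1 = b' + 1 from rfl]
    ring
  unfold S
  omega

lemma S_le (c b : ℕ) (hb : 2 ≤ b) {x : ℕ}
    (hx : x < b * (c + (b - 1) ^ 2 + 1)) : S c b x ≤ b * (c + (b - 1) ^ 2 + 1) := by
  have h1 := sq_sum_le' b hb x
  have hq : x / b ≤ c + (b - 1) ^ 2 := by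
    have := (Nat.div_lt_iff_lt_mul (by omega : 0 < b)).2 (by nlinarith : x < (c + (b - 1) ^ 2 + 1) * b)
    omega
  have h2 : (b - 1) * (x / b) ≤ (b - 1) * (c + (b - 1) ^ 2) := Nat.mul_le_mul_left _ hq
  have h3 : (b - 1) * (c + (b - 1) ^ 2) + (c + (b - 1) ^ 2) = b * (c + (b - 1) ^ 2) := by
    obtain ⟨b', rfl⟩ : ∃ b', b = b' + 2 := ⟨b - 2, by omega⟩
    simp only [show b' + 2 - 1 = b' + 1 from rfl]
    ring
  have h4 : b * (c + (b - 1) ^ 2) + b = b * (c + (b - 1) ^ 2 + 1) := by ring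
  unfold S
  omega

theorem stmt_1 (c b : ℕ) (hb : 2 ≤ b) :
    ∀ a : ℕ, 0 < a → ∃ (k : ℕ) (u : ℕ), 0 < u ∧
      (∃ m, 0 < m ∧ (S c b)^[m] u = u) ∧ (S c b)^[k] a = u := by
  intro a ha
  set N := b * (c + (b - 1) ^ 2 + 1) with hN
  -- the orbit is bounded by max a N
  have hbound : ∀ k, (S c b)^[k] a ≤ max a N := by
    intro k
    induction k with
    | zero => simp
    | succ k ih =>
      rw [Function.iterate_succ_apply']
      rcases le_or_gt N ((S c b)^[k] a) with h | h
      · exact le_trans (S_lt c b hb h).le ih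
      · exact le_trans (S_le c b hb h) (le_max_right _ _)
  -- the orbit stays positive
  have hpos : ∀ k, 0 < (S c b)^[k] a := by
    intro k
    induction k with
    | zero => simpa
    | succ k ih => rw [Function.iterate_succ_apply']; exact S_pos c b hb ih
  -- pigeonhole
  have : ∃ i j : ℕ, i ≠ j ∧
      (⟨(S c b)^[i] a, Nat.lt_succ_of_le (hbound i)⟩ : Fin (max a N + 1)) =
      ⟨(S c b)^[j] a, Nat.lt_succ_of_le (hbound j)⟩ :=
    Finite.exists_ne_map_eq_of_infinite _
  obtain ⟨i, j, hij, heq⟩ := this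
  have heq' : (S c b)^[i] a = (S c b)^[j] a := by
    simpa using congrArg Fin.val heq
  rcases lt_or_gt_of_ne hij with h | h
  · refine ⟨i, (S c b)^[i] a, hpos i, ⟨j - i, by omega, ?_⟩, rfl⟩
    rw [← Function.iterate_add_apply]
    rw [show j - i + i = j by omega]
    exact heq'.symm
  · refine ⟨j, (S c b)^[j] a, hpos j, ⟨i - j, by omega, ?_⟩, rfl⟩
    rw [← Function.iterate_add_apply]
    rw [show i - j + j = i by omega]
    exact heq'
end

section
/- Fix integers c ≥ 0 and b ≥ 2 with both c and b odd. Then S_{[c,b]} has no fixed points: there is no positive integer a with S_{[c,b]}(a) = a. -/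
lemma sq_sum_parity (L : List ℕ) : (L.map (· ^ 2)).sum ≡ L.sum [MOD 2] := by
  induction L with
  | nil => rfl
  | cons x xs ih =>
    simp only [List.map_cons, List.sum_cons]
    have hx : x ^ 2 ≡ x [MOD 2] := by
      unfold Nat.ModEq
      rw [Nat.pow_mod]
      rcases Nat.mod_two_eq_zero_or_one x with h | h <;> rw [h] <;> norm_num
    exact Nat.ModEq.add hx ih

theorem stmt_3 (c b : ℕ) (hb : 2 ≤ b) (hc : Odd c) (hbo : Odd b) :
    ¬ ∃ a : ℕ, 0 < a ∧ S c b a = a := by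
  rintro ⟨a, ha, hS⟩
  have h1 : (Nat.digits b a).sum ≡ a [MOD 2] := by
    conv_rhs => rw [← Nat.ofDigits_digits b a]
    have := (Nat.ofDigits_modEq b 2 (Nat.digits b a)).symm
    rwa [Nat.odd_iff.mp hbo, Nat.ofDigits_one] at this
  have h2 := (sq_sum_parity (Nat.digits b a)).trans h1
  have h3 : S c b a ≡ c + a [MOD 2] := Nat.ModEq.add_left c h2
  rw [hS] at h3
  have hc2 := Nat.odd_iff.mp hc
  unfold Nat.ModEq at h3
  omega
end

section
/- Fix integers c ≥ 0 and b ≥ 2 with both c and b odd. Then every cycle of S_{[c,b]} has even length: if a is a positive integer and k is a positive integer with S_{[c,b]}^k(a) = a, then k is even. -/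
lemma digits_sq_sum_mod_two (b a : ℕ) (hbo : Odd b) :
    ((Nat.digits b a).map (· ^ 2)).sum % 2 = a % 2 := by
  have h1 : ((Nat.digits b a).map (· ^ 2)).sum % 2 = (Nat.digits b a).sum % 2 := by
    induction Nat.digits b a with
    | nil => rfl
    | cons d l ih =>
      have hd : d ^ 2 % 2 = d % 2 := by
        rcases Nat.even_or_odd d with h | h
        · rcases h with ⟨m, rfl⟩; ring_nf; omega
        · rcases h with ⟨m, rfl⟩; ring_nf; omega
      rw [List.map_cons, List.sum_cons, List.sum_cons, Nat.add_mod, hd, ih, ← Nat.add_mod]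
  have h2 : (Nat.digits b a).sum % 2 = a % 2 := by
    conv_rhs => rw [← Nat.ofDigits_digits b a]
    have := Nat.ofDigits_mod b 2 (Nat.digits b a)
    have hb2 : b % 2 = 1 := Nat.odd_iff.mp hbo
    rw [hb2] at this
    rw [Nat.ofDigits_one] at this
    omega
  rw [h1, h2]

theorem stmt_4 (c b : ℕ) (hb : 2 ≤ b) (hc : Odd c) (hbo : Odd b) :
    ∀ a k : ℕ, 0 < a → 0 < k → (S c b)^[k] a = a → Even k := by
  have hS : ∀ a, S c b a % 2 = (a + 1) % 2 := by
    intro a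
    have := digits_sq_sum_mod_two b a hbo
    have hc2 : c % 2 = 1 := Nat.odd_iff.mp hc
    unfold S
    omega
  have hiter : ∀ k a, (S c b)^[k] a % 2 = (a + k) % 2 := by
    intro k
    induction k with
    | zero => simp
    | succ n ih =>
      intro a
      rw [Function.iterate_succ_apply', hS]
      have := ih a
      omega
  intro a k _ _ hk
  have := hiter k a
  rw [hk] at this
  rw [Nat.even_iff]
  omega
end

section
/- Fix integers c ≥ 0 and b ≥ 2. Let T be a finite nonempty set of positive integers, and suppose the image set {S_{[c,b]}(t) : t ∈ T} is [c,b]-good. Then T is [c,b]-good. -/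
/-- `u ∈ U_{[c,b]}`: `u` is a positive integer that is a periodic point of `S_{[c,b]}`. -/
def inU (c b u : ℕ) : Prop := 0 < u ∧ ∃ m, 0 < m ∧ (S c b)^[m] u = u

/-- A finite set `T` of positive integers is `[c,b]`-good if for each `u ∈ U_{[c,b]}`
there exist `n, k ≥ 0` such that `S_{[c,b]}^k (t + n) = u` for all `t ∈ T`. -/
def Good (c b : ℕ) (T : Finset ℕ) : Prop :=
  ∀ u, inU c b u → ∃ n k : ℕ, ∀ t ∈ T, (S c b)^[k] (t + n) = u

theorem stmt_6 (c b : ℕ) (hb : 2 ≤ b) (T : Finset ℕ) (hpos : ∀ t ∈ T, 0 < t)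
    (hne : T.Nonempty) (h : Good c b (T.image (S c b))) : Good c b T := by
  intro u hu
  obtain ⟨n, k, hk⟩ := h u hu
  rcases Nat.eq_zero_or_pos n with rfl | hn
  · refine ⟨0, k + 1, fun t ht => ?_⟩
    rw [Function.iterate_succ_apply]
    simpa using hk (S c b t) (Finset.mem_image_of_mem _ ht)
  · set m := Nat.ofDigits b (List.replicate n 1) with hm
    have hmd : Nat.digits b m = List.replicate n 1 := by
      apply Nat.digits_ofDigits b (by omega)
      · intro l hl; rw [List.eq_of_mem_replicate hl]; omega
      · intro hne'
        rw [List.getLast_replicate]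
        omega
    have hmpos : 0 < m := by
      rcases Nat.eq_zero_or_pos m with hz | h
      · rw [hz] at hmd; simp at hmd; omega
      · exact h
    set L := T.sup (fun t => (Nat.digits b t).length) with hL
    refine ⟨b ^ L * m, k + 1, fun t ht => ?_⟩
    have hlen : (Nat.digits b t).length ≤ L := Finset.le_sup (f := fun t => (Nat.digits b t).length) ht
    have hdig : Nat.digits b (t + b ^ L * m) =
        Nat.digits b t ++ List.replicate (L - (Nat.digits b t).length) 0
          ++ List.replicate n 1 := by
      have hg := Nat.digits_append_zeroes_append_digits
        (b := b) (k := L - (Nat.digits b t).length) (m := m) (n := t) (by omega) hmpos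
      rw [Nat.add_sub_cancel' hlen] at hg
      rw [← hmd]
      exact hg.symm
    have hS : S c b (t + b ^ L * m) = S c b t + n := by
      simp only [S, hdig, List.map_append, List.sum_append, List.map_replicate]
      simp [add_assoc]
    rw [Function.iterate_succ_apply, hS]
    exact hk (S c b t) (Finset.mem_image_of_mem _ ht)
end

section
/- Fix integers c ≥ 0 and b ≥ 2. Let F : ℤ⁺ → ℤ⁺ be a composition of a finite (possibly empty) sequence of the functions S_{[c,b]} and I, where I(t) = t + 1. If T is a finite set of positive integers such that the image F(T) is [c,b]-good, then T is [c,b]-good. -/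
lemma ofDigits_replicate_zero (b k : ℕ) : Nat.ofDigits b (List.replicate k 0) = 0 := by
  induction k with
  | zero => simp
  | succ k ih => simp [List.replicate_succ, Nat.ofDigits_cons, ih]

lemma ssq_add_mul_pow {b : ℕ} (hb : 2 ≤ b) {t d : ℕ} (ht : t < b ^ d) (m : ℕ) :
    ((Nat.digits b (t + m * b ^ d)).map (· ^ 2)).sum
      = ((Nat.digits b t).map (· ^ 2)).sum + ((Nat.digits b m).map (· ^ 2)).sum := by
  rcases Nat.eq_zero_or_pos m with rfl | hm
  · simp
  have hb1 : 1 < b := hb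
  have hlen : (Nat.digits b t).length ≤ d := by
    rcases Nat.eq_zero_or_pos t with rfl | ht0
    · simp
    · have h1 := Nat.base_pow_length_digits_le b t hb1 ht0.ne'
      have h2 : b ^ (Nat.digits b t).length < b ^ (d + 1) := by
        calc b ^ (Nat.digits b t).length ≤ b * t := h1
          _ < b * b ^ d := by exact (Nat.mul_lt_mul_left (by omega)).mpr ht
          _ = b ^ (d + 1) := by ring
      have := (Nat.pow_lt_pow_iff_right hb1).mp h2
      omega
  have hmnil : Nat.digits b m ≠ [] := Nat.digits_ne_nil_iff_ne_zero.mpr hm.ne'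
  have heq : t + m * b ^ d = Nat.ofDigits b (Nat.digits b t
      ++ List.replicate (d - (Nat.digits b t).length) 0 ++ Nat.digits b m) := by
    rw [Nat.ofDigits_append, Nat.ofDigits_append, ofDigits_replicate_zero,
      Nat.ofDigits_digits, Nat.ofDigits_digits]
    simp only [List.length_append, List.length_replicate]
    rw [Nat.add_sub_cancel' hlen]
    push_cast
    ring
  have hdig : Nat.digits b (Nat.ofDigits b (Nat.digits b t
      ++ List.replicate (d - (Nat.digits b t).length) 0 ++ Nat.digits b m))
      = Nat.digits b t ++ List.replicate (d - (Nat.digits b t).length) 0 ++ Nat.digits b m := by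
    apply Nat.digits_ofDigits b hb1
    · intro l hl
      simp only [List.mem_append, List.mem_replicate] at hl
      rcases hl with (hl | hl) | hl
      · exact Nat.digits_lt_base hb1 hl
      · omega
      · exact Nat.digits_lt_base hb1 hl
    · intro hne
      rw [List.getLast_append_of_ne_nil (h₂ := hmnil)]
      exact Nat.getLast_digit_ne_zero b hm.ne'
  rw [heq, hdig]
  simp [List.map_append, List.sum_append, List.map_replicate, List.sum_replicate]

lemma ssq_repunit {b : ℕ} (hb : 2 ≤ b) (n : ℕ) :
    ((Nat.digits b (Nat.ofDigits b (List.replicate n 1))).map (· ^ 2)).sum = n := by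
  rcases Nat.eq_zero_or_pos n with rfl | hn
  · simp
  have hb1 : 1 < b := hb
  have hd : Nat.digits b (Nat.ofDigits b (List.replicate n 1)) = List.replicate n 1 := by
    apply Nat.digits_ofDigits b hb1
    · intro l hl
      simp only [List.mem_replicate] at hl
      omega
    · intro hne
      rw [List.getLast_replicate]
      omega
  rw [hd]
  simp [List.map_replicate, List.sum_replicate]

lemma good_of_image_succ {c b : ℕ} {T : Finset ℕ} (h : Good c b (T.image (· + 1))) :
    Good c b T := by
  intro u hu
  obtain ⟨n, k, hk⟩ := h u hu
  refine ⟨n + 1, k, fun t ht => ?_⟩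
  rw [show t + (n + 1) = (t + 1) + n by omega]
  exact hk (t + 1) (Finset.mem_image_of_mem _ ht)

lemma good_of_image_S {c b : ℕ} (hb : 2 ≤ b) {T : Finset ℕ}
    (h : Good c b (T.image (S c b))) : Good c b T := by
  intro u hu
  obtain ⟨n, k, hk⟩ := h u hu
  refine ⟨Nat.ofDigits b (List.replicate n 1) * b ^ (T.sup id), k + 1, fun t ht => ?_⟩
  have ht' : t < b ^ (T.sup id) :=
    lt_of_le_of_lt (Finset.le_sup (f := id) ht) (Nat.lt_pow_self hb)
  rw [Function.iterate_succ_apply]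
  have hS : S c b (t + Nat.ofDigits b (List.replicate n 1) * b ^ (T.sup id))
      = S c b t + n := by
    unfold S
    rw [ssq_add_mul_pow hb ht', ssq_repunit hb]
    ring
  rw [hS]
  exact hk (S c b t) (Finset.mem_image_of_mem _ ht)

theorem stmt_7 (c b : ℕ) (hb : 2 ≤ b) (F : ℕ → ℕ)
    (hF : ∃ L : List (ℕ → ℕ), (∀ f ∈ L, f = S c b ∨ f = (· + 1)) ∧
      F = L.foldr (· ∘ ·) id)
    (T : Finset ℕ) (hpos : ∀ t ∈ T, 0 < t)
    (h : Good c b (T.image F)) : Good c b T := by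
  obtain ⟨L, hL, rfl⟩ := hF
  clear hpos
  induction L generalizing T with
  | nil => simpa using h
  | cons f L ih =>
    have hhead := hL f List.mem_cons_self
    have htail : ∀ g ∈ L, g = S c b ∨ g = (· + 1) := fun g hg => hL g (List.mem_cons_of_mem _ hg)
    have h' : Good c b ((T.image (L.foldr (· ∘ ·) id)).image f) := by
      rwa [Finset.image_image]
    apply ih _ htail
    rcases hhead with rfl | rfl
    · exact good_of_image_S hb h'
    · exact good_of_image_succ h'
end

section
/- Fix integers c ≥ 0 and b ≥ 2, and set d = gcd(2, b-1). If T is a finite nonempty set of positive integers all of whose elements are congruent modulo d, then T is [c,b]-good. -/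
namespace AGHaux


def sg (b a : ℕ) : ℕ := ((Nat.digits b a).map (· ^ 2)).sum

lemma sg_zero (b : ℕ) : sg b 0 = 0 := by simp [sg]

lemma sg_def {b : ℕ} (hb : 2 ≤ b) {a : ℕ} (ha : 0 < a) :
    sg b a = (a % b) ^ 2 + sg b (a / b) := by
  unfold sg
  rw [Nat.digits_def' hb ha]
  simp

lemma sg_lt_base {b : ℕ} (hb : 2 ≤ b) {a : ℕ} (ha : a < b) : sg b a = a ^ 2 := by
  rcases Nat.eq_zero_or_pos a with rfl | h
  · simp [sg]
  · rw [sg_def hb h, Nat.mod_eq_of_lt ha, Nat.div_eq_of_lt ha, sg_zero]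
    ring

lemma sg_add_mul_pow {b : ℕ} (hb : 2 ≤ b) :
    ∀ (L r x : ℕ), r < b ^ L → sg b (r + x * b ^ L) = sg b r + sg b x := by
  intro L
  induction L with
  | zero =>
    intro r x hr
    have : r = 0 := by simpa using hr
    subst this
    simp [sg_zero]
  | succ L ih =>
    intro r x hr
    rcases Nat.eq_zero_or_pos x with rfl | hx
    · simp [sg_zero]
    have hb0 : 0 < b := by omega
    have ha : 0 < r + x * b ^ (L + 1) := by positivity
    have hrw : r + x * b ^ (L + 1) = r + (x * b ^ L) * b := by ring
    have hmod : (r + x * b ^ (L + 1)) % b = r % b := by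
      rw [hrw, Nat.add_mul_mod_self_right]
    have hdiv : (r + x * b ^ (L + 1)) / b = r / b + x * b ^ L := by
      rw [hrw, Nat.add_mul_div_right _ _ hb0]
    have hrb : r / b < b ^ L := by
      rw [Nat.div_lt_iff_lt_mul hb0]
      calc r < b ^ (L + 1) := hr
        _ = b ^ L * b := by ring
    rw [sg_def hb ha, hmod, hdiv, ih _ _ hrb]
    rcases Nat.eq_zero_or_pos r with rfl | hrpos
    · simp [sg_zero]
    · rw [sg_def hb hrpos]; ring

lemma sg_mul_pow {b : ℕ} (hb : 2 ≤ b) (x L : ℕ) : sg b (x * b ^ L) = sg b x := by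
  have := sg_add_mul_pow hb L 0 x (by positivity)
  simpa [sg_zero] using this

/-- repunit with q ones -/
def rep (b : ℕ) : ℕ → ℕ
  | 0 => 0
  | q + 1 => 1 + rep b q * b

lemma sg_rep {b : ℕ} (hb : 2 ≤ b) (q : ℕ) : sg b (rep b q) = q := by
  induction q with
  | zero => simp [rep, sg_zero]
  | succ q ih =>
    show sg b (1 + rep b q * b) = q + 1
    have h := sg_add_mul_pow hb 1 1 (rep b q) (by rw [pow_one]; omega)
    simp only [pow_one] at h
    rw [h, ih, sg_lt_base hb (by omega)]
    ring

lemma rep_pos {b q : ℕ} (hq : 0 < q) : 0 < rep b q := by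
  cases q with
  | zero => omega
  | succ q => simp [rep]

lemma sg_pos {b : ℕ} (hb : 2 ≤ b) : ∀ {a : ℕ}, 0 < a → 0 < sg b a := by
  intro a
  induction a using Nat.strong_induction_on with
  | _ a ih =>
    intro ha
    rw [sg_def hb ha]
    rcases Nat.eq_zero_or_pos (a % b) with h0 | h1
    · have hdvd : b ∣ a := Nat.dvd_of_mod_eq_zero h0
      have hba : b ≤ a := Nat.le_of_dvd ha hdvd
      have hq : 0 < a / b := Nat.div_pos hba (by omega)
      have hlt : a / b < a := Nat.div_lt_self ha (by omega)
      have := ih _ hlt hq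
      omega
    · have : 1 ≤ (a % b) ^ 2 := Nat.one_le_pow _ _ h1
      omega

lemma sq_modeq_self (x : ℕ) : x ^ 2 ≡ x [MOD 2] := by
  have h : x ^ 2 % 2 = (x % 2) * (x % 2) % 2 := by
    rw [pow_two, Nat.mul_mod]
  have : x % 2 < 2 := Nat.mod_lt _ (by omega)
  unfold Nat.ModEq
  interval_cases h2 : x % 2 <;> omega

lemma sg_modeq {b : ℕ} (hb : 2 ≤ b) (d : ℕ) (hd : d = Nat.gcd 2 (b - 1)) :
    ∀ a : ℕ, sg b a ≡ a [MOD d] := by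
  have hd2 : d ∣ 2 := hd ▸ Nat.gcd_dvd_left _ _
  have hdb : d ∣ b - 1 := hd ▸ Nat.gcd_dvd_right _ _
  have hb1 : (1 : ℕ) ≡ b [MOD d] := (Nat.modEq_iff_dvd' (by omega)).mpr hdb
  intro a
  induction a using Nat.strong_induction_on with
  | _ a ih =>
    rcases Nat.eq_zero_or_pos a with rfl | ha
    · simpa [sg_zero] using Nat.ModEq.refl 0
    rw [sg_def hb ha]
    have h1 : (a % b) ^ 2 ≡ a % b [MOD d] := (sq_modeq_self (a % b)).of_dvd hd2
    have h2 : sg b (a / b) ≡ a / b [MOD d] := ih _ (Nat.div_lt_self ha (by omega))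
    have h3 : (1 : ℕ) * (a / b) ≡ b * (a / b) [MOD d] := hb1.mul_right _
    calc (a % b) ^ 2 + sg b (a / b)
        ≡ a % b + (a / b) [MOD d] := h1.add h2
      _ = a % b + 1 * (a / b) := by ring
      _ ≡ a % b + b * (a / b) [MOD d] := Nat.ModEq.add_left _ h3
      _ = a := Nat.mod_add_div a b
lemma choose_y {b : ℕ} (hb : 2 ≤ b) (A : ℕ) (hA : 2 ∣ (b - 1) → A % 2 = 1) :
    ∃ y' : ℕ, y' + 1 ≤ b - 1 ∧ (2 * y' + 1) ≡ A [MOD (b - 1)] := by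
  rcases Nat.eq_or_lt_of_le hb with hb2 | hb3
  · -- b = 2
    refine ⟨0, by omega, ?_⟩
    have : b - 1 = 1 := by omega
    rw [this]
    exact Nat.modEq_one
  · -- b ≥ 3
    have hbm : 2 ≤ b - 1 := by omega
    set ρ := A % (b - 1) with hρ
    have hρlt : ρ < b - 1 := Nat.mod_lt _ (by omega)
    have hmodeq : ρ ≡ A [MOD (b - 1)] := Nat.mod_modEq A (b - 1)
    rcases Nat.eq_zero_or_pos (ρ % 2) with he | ho
    · -- ρ even; then b-1 must be odd
      have hodd : ¬ (2 ∣ (b - 1)) := by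
        intro h2
        have := Nat.mod_mod_of_dvd A h2
        have hA1 := hA h2
        omega
      have hbodd : (b - 1) % 2 = 1 := by omega
      refine ⟨(ρ + b - 2) / 2, by omega, ?_⟩
      have h2y : 2 * ((ρ + b - 2) / 2) + 1 = ρ + (b - 1) := by omega
      rw [h2y]
      calc ρ + (b - 1) ≡ ρ + 0 [MOD (b - 1)] :=
            Nat.ModEq.add_left _ ((Nat.modEq_zero_iff_dvd).mpr dvd_rfl)
        _ = ρ := by ring
        _ ≡ A [MOD (b - 1)] := hmodeq
    · refine ⟨ρ / 2, by omega, ?_⟩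
      have h2y : 2 * (ρ / 2) + 1 = ρ := by omega
      rw [h2y]
      exact hmodeq
def S' (c b a : ℕ) : ℕ := S c b a

lemma S'_eq (c b a : ℕ) : S' c b a = c + sg b a := rfl

lemma S'_pos {b : ℕ} (hb : 2 ≤ b) (c : ℕ) {x : ℕ} (hx : 0 < x) : 0 < S' c b x :=
  lt_of_lt_of_le (sg_pos hb hx) (Nat.le_add_left _ _)

lemma S'_modeq {b : ℕ} (hb : 2 ≤ b) (c : ℕ) {x x' : ℕ}
    (h : x ≡ x' [MOD Nat.gcd 2 (b - 1)]) :
    S' c b x ≡ S' c b x' [MOD Nat.gcd 2 (b - 1)] := by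
  rw [S'_eq, S'_eq]
  exact Nat.ModEq.add_left c
    (((sg_modeq hb _ rfl x).trans h).trans (sg_modeq hb _ rfl x').symm)

/-- statement: all of `T` can be steered (by one common shift) to any
sufficiently large common value. -/
def okk (c b : ℕ) (T : Finset ℕ) : Prop :=
  ∃ v₀, ∀ v, v₀ ≤ v → ∃ n k, ∀ t ∈ T, (S' c b)^[k] (t + n) = v

lemma comp {c b : ℕ} (hb : 2 ≤ b) (T : Finset ℕ) (n₀ : ℕ)
    (h : okk c b (T.image fun t => S' c b (t + n₀))) : okk c b T := by
  obtain ⟨v₀, hv⟩ := h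
  refine ⟨v₀, fun v hvv => ?_⟩
  obtain ⟨Q, k, hQ⟩ := hv v hvv
  set L := T.sup id + n₀ + 1 with hL
  refine ⟨n₀ + rep b Q * b ^ L, k + 1, fun t ht => ?_⟩
  have htL : t + n₀ < b ^ L := by
    have h1 : t ≤ T.sup id := Finset.le_sup (f := id) ht
    have h2 : L < b ^ L := Nat.lt_pow_self (by omega)
    omega
  have hstep : S' c b ((t + n₀) + rep b Q * b ^ L) = S' c b (t + n₀) + Q := by
    rw [S'_eq, S'_eq, sg_add_mul_pow hb L _ _ htL, sg_rep hb]
    ring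
  have harr : t + (n₀ + rep b Q * b ^ L) = (t + n₀) + rep b Q * b ^ L := by ring
  rw [harr, Function.iterate_succ_apply, hstep]
  exact hQ _ (Finset.mem_image_of_mem _ ht)

lemma card_image_lt {f : ℕ → ℕ} {s : Finset ℕ} {a b : ℕ}
    (ha : a ∈ s) (hb : b ∈ s) (hne : a ≠ b) (hf : f a = f b) :
    (s.image f).card < s.card := by
  have hbe : b ∈ s.erase a := Finset.mem_erase.mpr ⟨hne.symm, hb⟩
  have himg : s.image f = (s.erase a).image f := by
    conv_lhs => rw [← Finset.insert_erase ha]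
    rw [Finset.image_insert]
    exact Finset.insert_eq_self.mpr (hf ▸ Finset.mem_image_of_mem f hbe)
  rw [himg]
  calc ((s.erase a).image f).card ≤ (s.erase a).card := Finset.card_image_le
    _ < s.card := Finset.card_erase_lt_of_mem ha
lemma step {c b : ℕ} (hb : 2 ≤ b) (T : Finset ℕ) (hpos : ∀ t ∈ T, 0 < t)
    (hcong : ∀ t₁ ∈ T, ∀ t₂ ∈ T, t₁ ≡ t₂ [MOD Nat.gcd 2 (b - 1)])
    {t₁ t₂ : ℕ} (ht₁ : t₁ ∈ T) (ht₂ : t₂ ∈ T) (hlt : t₁ < t₂)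
    (ih : ∀ T' : Finset ℕ, T'.card < T.card → (∀ t ∈ T', 0 < t) → T'.Nonempty →
      (∀ a ∈ T', ∀ a' ∈ T', a ≡ a' [MOD Nat.gcd 2 (b - 1)]) → okk c b T') :
    okk c b T := by
  obtain ⟨v, rfl⟩ : ∃ v, b = v + 1 := ⟨b - 1, by omega⟩
  have hv1 : 1 ≤ v := by omega
  obtain ⟨δ, hδ⟩ : ∃ δ, δ = t₂ - t₁ := ⟨_, rfl⟩
  have hδpos : 0 < δ := by omega
  have hδd : Nat.gcd 2 v ∣ δ := by
    have := (Nat.modEq_iff_dvd' (le_of_lt hlt)).mp (hcong t₁ ht₁ t₂ ht₂)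
    rw [hδ]
    simpa using this
  obtain ⟨m₀, hm₀⟩ : ∃ m₀, m₀ = δ + t₁ + 1 := ⟨_, rfl⟩
  have hm₀lt : m₀ < (v+1) ^ m₀ := Nat.lt_pow_self (by omega)
  obtain ⟨E, hEδ⟩ : ∃ E, E + δ = (v+1) ^ m₀ :=
    ⟨(v+1) ^ m₀ - δ, Nat.sub_add_cancel (by omega)⟩
  obtain ⟨A₀, hA₀⟩ : ∃ A₀, A₀ = sg (v+1) E := ⟨_, rfl⟩
  obtain ⟨A, hA⟩ : ∃ A, A = A₀ + 2 * v ^ 2 := ⟨_, rfl⟩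
  have hApar : 2 ∣ ((v+1) - 1) → A % 2 = 1 := by
    intro h2
    simp only [Nat.add_sub_cancel] at h2
    have hd2 : Nat.gcd 2 v = 2 := Nat.gcd_eq_left h2
    have hδ2 : 2 ∣ δ := hd2 ▸ hδd
    have hbm : (v+1) ^ m₀ % 2 = 1 := by
      have hpm := Nat.pow_mod (v+1) m₀ 2
      have hv2 : (v+1) % 2 = 1 := by omega
      rw [hv2, one_pow] at hpm
      omega
    have hE2 : E % 2 = 1 := by omega
    have hcong2 : A₀ ≡ E [MOD 2] := by
      rw [hA₀]
      have := sg_modeq (show 2 ≤ v + 1 by omega) (Nat.gcd 2 ((v+1) - 1)) rfl E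
      simpa [Nat.add_sub_cancel, hd2] using this
    have h2x : 2 * v ^ 2 % 2 = 0 := Nat.mul_mod_right 2 _
    unfold Nat.ModEq at hcong2
    omega
  obtain ⟨y', hy'le, hy'cong⟩ := choose_y hb A hApar
  have hy'lev : y' + 1 ≤ v := by omega
  have hsq : v ≤ v ^ 2 := Nat.le_self_pow two_ne_zero v
  have hA₀0 : 0 ≤ A₀ := Nat.zero_le _
  have hAge : 2 * y' + 1 ≤ A := by omega
  obtain ⟨δ₁, hδ₁A⟩ : ∃ δ₁, δ₁ + (2 * y' + 1) = A := ⟨A - (2 * y' + 1), by omega⟩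
  have hdvd1 : v ∣ δ₁ := by
    have := (Nat.modEq_iff_dvd' hAge).mp hy'cong
    simpa [show A - (2 * y' + 1) = δ₁ by omega] using this
  obtain ⟨N, hNδ₁⟩ : ∃ N, v * N = δ₁ := ⟨δ₁ / v, Nat.mul_div_cancel' hdvd1⟩
  obtain ⟨y, hy⟩ : ∃ y, y = y' + 1 := ⟨_, rfl⟩
  obtain ⟨X, hX⟩ : ∃ X, X = ((v+1) ^ 2 - 1) + y' * (v+1) ^ 2 := ⟨_, rfl⟩
  obtain ⟨ℓ, hℓ⟩ : ∃ ℓ, ℓ = E + X * (v+1) ^ m₀ := ⟨_, rfl⟩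
  have hB1 : 1 ≤ (v+1) ^ 2 := Nat.one_le_pow _ _ (by omega)
  have hXy : 1 + X = y * (v+1) ^ 2 := by
    have h1B : 1 + ((v+1) ^ 2 - 1) = (v+1) ^ 2 := by omega
    have hyy : y * (v+1) ^ 2 = (v+1) ^ 2 + y' * (v+1) ^ 2 := by rw [hy]; ring
    calc 1 + X = (1 + ((v+1) ^ 2 - 1)) + y' * (v+1) ^ 2 := by rw [hX]; ring
      _ = (v+1) ^ 2 + y' * (v+1) ^ 2 := by rw [h1B]
      _ = y * (v+1) ^ 2 := hyy.symm
  have hℓδ : ℓ + δ = y * (v+1) ^ (m₀ + 2) := by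
    calc ℓ + δ = (E + δ) + X * (v+1) ^ m₀ := by rw [hℓ]; ring
      _ = (v+1) ^ m₀ + X * (v+1) ^ m₀ := by rw [hEδ]
      _ = (1 + X) * (v+1) ^ m₀ := by ring
      _ = (y * (v+1) ^ 2) * (v+1) ^ m₀ := by rw [hXy]
      _ = y * (v+1) ^ (m₀ + 2) := by rw [pow_add]; ring
  have hylt : y < v + 1 := by omega
  have hsgℓδ : sg (v+1) (ℓ + δ) = y ^ 2 := by
    rw [hℓδ, sg_mul_pow hb, sg_lt_base hb hylt]
  have hElt : E < (v+1) ^ m₀ := by omega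
  have hv2 : (v+1) ^ 2 - 1 = v + v * (v+1) := by
    refine Nat.sub_eq_of_eq_add ?_
    ring
  have hsgv2 : sg (v+1) ((v+1) ^ 2 - 1) = 2 * v ^ 2 := by
    rw [hv2]
    have h1 : v + v * (v+1) = v + v * (v+1) ^ 1 := by ring
    rw [h1, sg_add_mul_pow hb 1 v v (by rw [pow_one]; omega), sg_lt_base hb (by omega)]
    ring
  have hsgX : sg (v+1) X = 2 * v ^ 2 + y' ^ 2 := by
    rw [hX, sg_add_mul_pow hb 2 _ _ (by omega), hsgv2, sg_lt_base hb (by omega)]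
  have hsgℓ : sg (v+1) ℓ = y ^ 2 + δ₁ := by
    rw [hℓ, sg_add_mul_pow hb m₀ E X hElt, ← hA₀, hsgX]
    have hy2 : y ^ 2 = y' ^ 2 + 2 * y' + 1 := by rw [hy]; ring
    omega
  -- stage-1 values
  have hbN : (v+1) * N = δ₁ + N := by rw [← hNδ₁]; ring
  obtain ⟨m', hm'lt⟩ : ∃ m', (v+1) * N + c + y ^ 2 < (v+1) ^ m' :=
    ⟨(v+1) * N + c + y ^ 2 + 1, by
      have : (v+1) * N + c + y ^ 2 + 1 < (v+1) ^ ((v+1) * N + c + y ^ 2 + 1) := Nat.lt_pow_self (show 1 < v + 1 by omega)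
      omega⟩
  obtain ⟨q, hqe⟩ : ∃ q, q + (c + y ^ 2) = (v+1) ^ m' + N :=
    ⟨((v+1) ^ m' + N) - (c + y ^ 2), by omega⟩
  obtain ⟨L₁, hL₁⟩ : ∃ L, ℓ + δ < (v+1) ^ L :=
    ⟨ℓ + δ + 1, by
      have : ℓ + δ + 1 < (v+1) ^ (ℓ + δ + 1) := Nat.lt_pow_self (show 1 < v + 1 by omega)
      omega⟩
  have hℓt₁ : t₁ ≤ ℓ := by
    have h1 : E ≤ ℓ := by rw [hℓ]; exact Nat.le_add_right _ _
    omega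
  obtain ⟨R, hR⟩ : ∃ R, R = rep (v+1) q * (v+1) ^ L₁ := ⟨_, rfl⟩
  obtain ⟨n₀, hn₀⟩ : ∃ n₀, n₀ = (ℓ - t₁) + R := ⟨_, rfl⟩
  have h1 : t₁ + n₀ = ℓ + R := by omega
  have h2 : t₂ + n₀ = (ℓ + δ) + R := by omega
  have hsgR : ∀ z, z ≤ ℓ + δ → sg (v+1) (z + R) = sg (v+1) z + q := by
    intro z hz
    rw [hR, sg_add_mul_pow hb L₁ _ _ (by omega), sg_rep hb]
  have hS1 : S' c (v+1) (t₁ + n₀) = (v+1) ^ m' + (v+1) * N := by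
    rw [S'_eq, h1, hsgR ℓ (by omega), hsgℓ]
    omega
  have hS2 : S' c (v+1) (t₂ + n₀) = (v+1) ^ m' + N := by
    rw [S'_eq, h2, hsgR (ℓ + δ) (by omega), hsgℓδ]
    omega
  -- image sets
  have hgP : S' c (v+1) (((v+1) ^ m' + (v+1) * N) + 0)
      = S' c (v+1) (((v+1) ^ m' + N) + 0) := by
    simp only [add_zero]
    rw [S'_eq, S'_eq]
    have e1 : (v+1) ^ m' + (v+1) * N = (v+1) * N + 1 * (v+1) ^ m' := by ring
    have e2 : (v+1) ^ m' + N = N + 1 * (v+1) ^ m' := by ring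
    rw [e1, e2, sg_add_mul_pow hb m' _ _ (by omega), sg_add_mul_pow hb m' _ _ (by omega)]
    have e3 : (v+1) * N = N * (v+1) ^ 1 := by ring
    rw [e3, sg_mul_pow hb]
  have hP₁ : (v+1) ^ m' + (v+1) * N ∈ T.image (fun t => S' c (v+1) (t + n₀)) :=
    hS1 ▸ Finset.mem_image_of_mem _ ht₁
  have hP₂ : (v+1) ^ m' + N ∈ T.image (fun t => S' c (v+1) (t + n₀)) :=
    hS2 ▸ Finset.mem_image_of_mem _ ht₂
  have hcard₂ : (((T.image (fun t => S' c (v+1) (t + n₀))).image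
      (fun a => S' c (v+1) (a + 0)))).card < T.card := by
    rcases Nat.eq_zero_or_pos N with hN0 | hNpos
    · have hff : S' c (v+1) (t₁ + n₀) = S' c (v+1) (t₂ + n₀) := by
        rw [hS1, hS2, hN0, Nat.mul_zero]
      have hlt1 := card_image_lt (f := fun t => S' c (v+1) (t + n₀))
        ht₁ ht₂ (Nat.ne_of_lt hlt) hff
      calc _ ≤ (T.image (fun t => S' c (v+1) (t + n₀))).card := Finset.card_image_le
        _ < T.card := hlt1
    · have hδ₁pos : 0 < δ₁ := by
        have : v * N > 0 := by positivity
        omega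
      have hPne : (v+1) ^ m' + (v+1) * N ≠ (v+1) ^ m' + N := by omega
      calc _ < (T.image (fun t => S' c (v+1) (t + n₀))).card :=
            card_image_lt hP₁ hP₂ hPne hgP
        _ ≤ T.card := Finset.card_image_le
  -- properties of A₂ and conclusion
  have hA₂pos : ∀ a ∈ (T.image (fun t => S' c (v+1) (t + n₀))).image
      (fun a => S' c (v+1) (a + 0)), 0 < a := by
    intro a ha
    obtain ⟨a', ha', rfl⟩ := Finset.mem_image.mp ha
    obtain ⟨t, ht, rfl⟩ := Finset.mem_image.mp ha'
    have hin : 0 < S' c (v+1) (t + n₀) :=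
      S'_pos (show 2 ≤ v + 1 by omega) c (by have := hpos t ht; omega)
    exact S'_pos (show 2 ≤ v + 1 by omega) c (by omega)
  have hA₂ne : ((T.image (fun t => S' c (v+1) (t + n₀))).image
      (fun a => S' c (v+1) (a + 0))).Nonempty :=
    Finset.Nonempty.image (Finset.Nonempty.image ⟨t₁, ht₁⟩ _) _
  have hA₂cong : ∀ a ∈ (T.image (fun t => S' c (v+1) (t + n₀))).image
      (fun a => S' c (v+1) (a + 0)),
      ∀ a' ∈ (T.image (fun t => S' c (v+1) (t + n₀))).image
      (fun a => S' c (v+1) (a + 0)), a ≡ a' [MOD Nat.gcd 2 ((v+1) - 1)] := by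
    intro a ha a' ha'
    obtain ⟨w, hw, rfl⟩ := Finset.mem_image.mp ha
    obtain ⟨t, ht, rfl⟩ := Finset.mem_image.mp hw
    obtain ⟨w', hw', rfl⟩ := Finset.mem_image.mp ha'
    obtain ⟨t', ht', rfl⟩ := Finset.mem_image.mp hw'
    have h0 : t + n₀ ≡ t' + n₀ [MOD Nat.gcd 2 ((v+1) - 1)] :=
      Nat.ModEq.add_right n₀ (hcong t ht t' ht')
    have h1' := S'_modeq (show 2 ≤ v + 1 by omega) c h0
    have h2' : S' c (v+1) (t + n₀) + 0 ≡ S' c (v+1) (t' + n₀) + 0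
        [MOD Nat.gcd 2 ((v+1) - 1)] := Nat.ModEq.add_right 0 h1'
    exact S'_modeq (show 2 ≤ v + 1 by omega) c h2'
  obtain ⟨v₀, hv₀⟩ := ih _ hcard₂ hA₂pos hA₂ne hA₂cong
  exact comp hb T n₀ (comp hb _ 0 ⟨v₀, hv₀⟩)
lemma mergeAll {c b : ℕ} (hb : 2 ≤ b) :
    ∀ (r : ℕ) (T : Finset ℕ), T.card ≤ r → (∀ t ∈ T, 0 < t) → T.Nonempty →
    (∀ t₁ ∈ T, ∀ t₂ ∈ T, t₁ ≡ t₂ [MOD Nat.gcd 2 (b - 1)]) → okk c b T := by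
  intro r
  induction r with
  | zero =>
    intro T hcard hpos hne _
    exact absurd (Finset.card_pos.mpr hne) (by omega)
  | succ r ih =>
    intro T hcard hpos hne hcong
    by_cases hbig : 2 ≤ T.card
    · obtain ⟨a₁, ha₁, a₂, ha₂, hne12⟩ := Finset.one_lt_card.mp hbig
      have ih' : ∀ T' : Finset ℕ, T'.card < T.card → (∀ t ∈ T', 0 < t) → T'.Nonempty →
          (∀ x ∈ T', ∀ x' ∈ T', x ≡ x' [MOD Nat.gcd 2 (b - 1)]) → okk c b T' := by
        intro T' hc hp hn hcg
        exact ih T' (by omega) hp hn hcg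
      rcases Nat.lt_or_ge a₁ a₂ with hlt | hge
      · exact step hb T hpos hcong ha₁ ha₂ hlt ih'
      · have hlt : a₂ < a₁ := by omega
        exact step hb T hpos hcong ha₂ ha₁ hlt ih'
    · have h1 : T.card = 1 := by
        have := Finset.card_pos.mpr hne
        omega
      obtain ⟨t, rfl⟩ := Finset.card_eq_one.mp h1
      have ht : 0 < t := hpos t (Finset.mem_singleton_self t)
      refine ⟨c + 1, fun v hv => ?_⟩
      obtain ⟨L, hL⟩ : ∃ L, t < b ^ L :=
        ⟨t + 1, by have : t + 1 < b ^ (t + 1) := Nat.lt_pow_self (show 1 < b by omega); omega⟩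
      have hWt : t ≤ rep b (v - c) * b ^ L := by
        have h2 : 0 < rep b (v - c) := rep_pos (by omega)
        have h3 : b ^ L ≤ rep b (v - c) * b ^ L := Nat.le_mul_of_pos_left _ h2
        omega
      refine ⟨rep b (v - c) * b ^ L - t, 1, fun t' ht' => ?_⟩
      rw [Finset.mem_singleton] at ht'
      subst ht'
      have harr : t' + (rep b (v - c) * b ^ L - t') = rep b (v - c) * b ^ L := by omega
      rw [Function.iterate_one, harr, S'_eq, sg_mul_pow hb, sg_rep hb]
      omega

theorem stmt_10' (c b : ℕ) (hb : 2 ≤ b) (d : ℕ) (hd : d = Nat.gcd 2 (b - 1))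
    (T : Finset ℕ) (hpos : ∀ t ∈ T, 0 < t) (hne : T.Nonempty)
    (h : ∀ t₁ ∈ T, ∀ t₂ ∈ T, t₁ ≡ t₂ [MOD d]) :
    ∀ u, (0 < u ∧ ∃ m, 0 < m ∧ (S' c b)^[m] u = u) →
      ∃ n k : ℕ, ∀ t ∈ T, (S' c b)^[k] (t + n) = u := by
  subst hd
  intro u ⟨hu, m, hm, hiter⟩
  -- every iterate of u is positive
  have hit : ∀ j, 0 < (S' c b)^[j] u := by
    intro j
    induction j with
    | zero => exact hu
    | succ j ihj =>
      rw [Function.iterate_succ_apply']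
      exact S'_pos hb c ihj
  have huc : c + 1 ≤ u := by
    obtain ⟨m', rfl⟩ : ∃ m', m = m' + 1 := ⟨m - 1, by omega⟩
    have h1 : (S' c b)^[m' + 1] u = S' c b ((S' c b)^[m'] u) :=
      Function.iterate_succ_apply' _ _ _
    have h2 : 0 < sg b ((S' c b)^[m'] u) := sg_pos hb (hit m')
    have h3 : u = c + sg b ((S' c b)^[m'] u) := by rw [← S'_eq, ← h1, hiter]
    omega
  obtain ⟨v₀, hv₀⟩ := mergeAll (c := c) hb T.card T le_rfl hpos hne h
  obtain ⟨L, hL⟩ : ∃ L, v₀ < b ^ L :=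
    ⟨v₀ + 1, by have : v₀ + 1 < b ^ (v₀ + 1) := Nat.lt_pow_self (show 1 < b by omega); omega⟩
  have hvbig : v₀ ≤ rep b (u - c) * b ^ L := by
    have h2 : 0 < rep b (u - c) := rep_pos (by omega)
    have h3 : b ^ L ≤ rep b (u - c) * b ^ L := Nat.le_mul_of_pos_left _ h2
    omega
  obtain ⟨n, k, hnk⟩ := hv₀ _ hvbig
  refine ⟨n, k + 1, fun t ht => ?_⟩
  rw [Function.iterate_succ_apply', hnk t ht, S'_eq, sg_mul_pow hb, sg_rep hb]
  omega

end AGHaux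

theorem stmt_10 (c b : ℕ) (hb : 2 ≤ b) (d : ℕ) (hd : d = Nat.gcd 2 (b - 1))
    (T : Finset ℕ) (hpos : ∀ t ∈ T, 0 < t) (hne : T.Nonempty)
    (h : ∀ t₁ ∈ T, ∀ t₂ ∈ T, t₁ ≡ t₂ [MOD d]) :
    Good c b T := by
  intro u hu
  obtain ⟨hu0, m, hm, hit⟩ := hu
  exact AGHaux.stmt_10' c b hb d hd T hpos hne h u ⟨hu0, m, hm, hit⟩
end

section
/- Fix integers c ≥ 0 and b ≥ 2, let u ∈ U_{[c,b]}, and set d = gcd(2, b-1). Then there exist arbitrarily long finite d-consecutive sequences of u-attracted numbers for S_{[c,b]}: for every positive integer N there exists a positive integer n such that n, n + d, n + 2d, …, n + (N-1)d are all u-attracted. -/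
namespace Stmt11

/-- sum of squares of base-b digits -/
def sq (b x : ℕ) : ℕ := ((Nat.digits b x).map (· ^ 2)).sum

lemma S_eq (c b a : ℕ) : S c b a = c + sq b a := rfl

lemma sq_zero (b : ℕ) : sq b 0 = 0 := by simp [sq]

lemma sq_mul_add (b : ℕ) (hb : 2 ≤ b) (m r : ℕ) (hr : r < b) :
    sq b (b * m + r) = r ^ 2 + sq b m := by
  rcases Nat.eq_zero_or_pos (b * m + r) with h | h
  · have hm : m = 0 := by
      rcases Nat.eq_zero_or_pos m with h' | h'
      · exact h'
      · exfalso; nlinarith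
    have hr0 : r = 0 := by omega
    subst hm; subst hr0; simp [sq]
  · unfold sq
    rw [Nat.digits_def' (by omega : 1 < b) h]
    have e1 : (b * m + r) % b = r := by
      rw [Nat.mul_add_mod]; exact Nat.mod_eq_of_lt hr
    have e2 : (b * m + r) / b = m := by
      rw [Nat.mul_add_div (by omega)]
      simp [Nat.div_eq_of_lt hr]
    rw [e1, e2]; simp

lemma sq_decomp (b : ℕ) (hb : 2 ≤ b) (x : ℕ) :
    sq b x = (x % b) ^ 2 + sq b (x / b) := by
  rcases Nat.eq_zero_or_pos x with rfl | hx
  · simp [sq]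
  · conv_lhs => rw [← Nat.div_add_mod x b]
    exact sq_mul_add b hb _ _ (Nat.mod_lt _ (by omega))

lemma sq_pow_mul_add (b : ℕ) (hb : 2 ≤ b) (x : ℕ) :
    ∀ K z, z < b ^ K → sq b (x * b ^ K + z) = sq b x + sq b z := by
  intro K
  induction K generalizing x with
  | zero =>
    intro z hz
    rw [pow_zero] at hz
    have : z = 0 := by omega
    subst this
    simp [sq_zero]
  | succ K ih =>
    intro z hz
    have hzb : z / b < b ^ K := by
      have h : z < b * b ^ K := by rw [← pow_succ']; exact hz
      exact Nat.div_lt_of_lt_mul h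
    have hrw : x * b ^ (K+1) + z = b * (x * b ^ K + z / b) + z % b := by
      have h1 : b * (z / b) + z % b = z := Nat.div_add_mod z b
      calc x * b ^ (K+1) + z = b * (x * b ^ K) + (b * (z / b) + z % b) := by
            rw [h1]; ring
        _ = b * (x * b ^ K + z / b) + z % b := by ring
    rw [hrw, sq_mul_add b hb _ _ (Nat.mod_lt _ (by omega)), ih x _ hzb,
      sq_decomp b hb z]
    ring

lemma sq_pos (b : ℕ) (hb : 2 ≤ b) : ∀ x, 0 < x → 0 < sq b x := by
  intro x
  induction x using Nat.strong_induction_on with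
  | _ x ih =>
    intro hx
    rw [sq_decomp b hb x]
    rcases Nat.eq_zero_or_pos (x % b) with h | h
    · have hdiv : 0 < x / b := by
        rcases Nat.eq_zero_or_pos (x / b) with h' | h'
        · exfalso; have hd := Nat.div_add_mod x b; rw [h', h] at hd; omega
        · exact h'
      have := ih (x / b) (Nat.div_lt_self hx (by omega)) hdiv
      omega
    · have : 0 < (x % b) ^ 2 := by positivity
      omega

/-- repunit -/
def rep (b : ℕ) : ℕ → ℕ
  | 0 => 0
  | m + 1 => b * rep b m + 1

lemma sq_rep (b : ℕ) (hb : 2 ≤ b) : ∀ m, sq b (rep b m) = m := by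
  intro m
  induction m with
  | zero => simp [rep, sq_zero]
  | succ m ih =>
    show sq b (b * rep b m + 1) = m + 1
    rw [sq_mul_add b hb _ _ (by omega), ih]
    ring

lemma rep_pos (b m : ℕ) (hm : 0 < m) : 0 < rep b m := by
  cases m with
  | zero => omega
  | succ m => show 0 < b * rep b m + 1; omega

lemma sq_modEq (b e : ℕ) (hb : 2 ≤ b) (h2 : e ∣ 2) (hbe : e ∣ b - 1) :
    ∀ x, sq b x ≡ x [MOD e] := by
  intro x
  induction x using Nat.strong_induction_on with
  | _ x ih =>
    rcases Nat.eq_zero_or_pos x with rfl | hx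
    · rw [sq_zero]
    · have h1 := sq_decomp b hb x
      have hsq : (x % b) ^ 2 ≡ x % b [MOD e] := by
        refine Nat.ModEq.of_dvd h2 ?_
        unfold Nat.ModEq
        rw [Nat.pow_mod]
        rcases Nat.mod_two_eq_zero_or_one (x % b) with h | h <;> rw [h]
      have hb1 : b ≡ 1 [MOD e] := ((Nat.modEq_iff_dvd' (by omega)).2 hbe).symm
      have hdiv : sq b (x / b) ≡ x / b [MOD e] := ih _ (Nat.div_lt_self hx (by omega))
      calc sq b x = (x % b) ^ 2 + sq b (x / b) := h1
        _ ≡ x % b + x / b [MOD e] := hsq.add hdiv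
        _ = x % b + 1 * (x / b) := by ring
        _ ≡ x % b + b * (x / b) [MOD e] := (hb1.symm.mul_right _).add_left _
        _ = x := by have := Nat.div_add_mod x b; omega

lemma iter_pos (c b u : ℕ) (hb : 2 ≤ b) (hu : 0 < u) :
    ∀ k, 0 < (S c b)^[k] u := by
  intro k
  induction k with
  | zero => exact hu
  | succ k ih =>
    rw [Function.iterate_succ_apply']
    have := sq_pos b hb _ ih
    rw [S_eq]
    omega

lemma u_ge (c b u : ℕ) (hb : 2 ≤ b) (hu : inU c b u) : c + 1 ≤ u := by
  obtain ⟨hupos, m, hm, hit⟩ := hu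
  have hy : 0 < (S c b)^[m-1] u := iter_pos c b u hb hupos _
  have hsq := sq_pos b hb _ hy
  have : u = S c b ((S c b)^[m-1] u) := by
    conv_lhs => rw [← hit, show m = (m-1) + 1 by omega, Function.iterate_succ_apply']
  rw [this, S_eq]
  omega

lemma exists_A_ge (c b u : ℕ) (hb : 2 ≤ b) (hu : inU c b u) (M : ℕ) :
    ∃ v, (∃ k, (S c b)^[k] v = u) ∧ M ≤ v := by
  have hcu := u_ge c b u hb hu
  refine ⟨rep b (u - c) * b ^ M, ⟨1, ?_⟩, ?_⟩
  · rw [Function.iterate_one, S_eq]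
    have h0 : (0:ℕ) < b ^ M := Nat.pow_pos (by omega)
    have : rep b (u - c) * b ^ M = rep b (u - c) * b ^ M + 0 := by omega
    rw [this, sq_pow_mul_add b hb _ _ _ h0, sq_zero, sq_rep b hb]
    omega
  · have h1 : 1 ≤ rep b (u - c) := rep_pos b _ (by omega)
    have h2 : M < b ^ M := Nat.lt_pow_self (by omega)
    calc M ≤ b ^ M := by omega
      _ = 1 * b ^ M := by ring
      _ ≤ rep b (u - c) * b ^ M := Nat.mul_le_mul_right _ h1

lemma move (c b u : ℕ) (hb : 2 ≤ b) (F : Finset ℕ) (t₀ : ℕ)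
    (h : ∃ t', ∀ w ∈ F, ∃ k, (S c b)^[k] (c + sq b (w + t₀) + t') = u) :
    ∃ t, ∀ w ∈ F, ∃ k, (S c b)^[k] (w + t) = u := by
  obtain ⟨t', h⟩ := h
  set L := F.sup id + t₀ + 1 with hLdef
  have hL : ∀ w ∈ F, w + t₀ < b ^ L := by
    intro w hw
    have h1 : w ≤ F.sup id := Finset.le_sup (f := id) hw
    have h2 : L < b ^ L := Nat.lt_pow_self (by omega)
    omega
  refine ⟨rep b t' * b ^ L + t₀, ?_⟩
  intro w hw
  have harg : w + (rep b t' * b ^ L + t₀) = rep b t' * b ^ L + (w + t₀) := by ring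
  have hS : S c b (w + (rep b t' * b ^ L + t₀)) = c + sq b (w + t₀) + t' := by
    rw [S_eq, harg, sq_pow_mul_add b hb _ _ _ (hL w hw), sq_rep b hb]
    ring
  obtain ⟨k, hk⟩ := h w hw
  exact ⟨k + 1, by rw [Function.iterate_succ_apply, hS]; exact hk⟩

lemma gadget (b : ℕ) (hb : 2 ≤ b) (s M : ℕ) (hsM : s ≤ M) (hdvd : (b - 1) ∣ (M - s)) :
    ∃ t₁, sq b (s + t₁) = sq b (M + t₁) := by
  obtain ⟨m, hm⟩ := hdvd
  have hMs : s + m * (b - 1) = M := by rw [mul_comm]; omega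
  have hpow : m * b + 1 < b ^ (m * b + 1) := Nat.lt_pow_self (by omega)
  have hmbL : m * b < b ^ (m * b + 1) := by omega
  have hmL : m < b ^ (m * b + 1) := by
    have : m ≤ m * b := Nat.le_mul_of_pos_right m (by omega)
    omega
  have hs1 : s + 1 ≤ (s + 1) * b ^ (m * b + 1) :=
    Nat.le_mul_of_pos_right _ (by positivity)
  refine ⟨(s + 1) * b ^ (m * b + 1) + m - s, ?_⟩
  have hst : s + ((s + 1) * b ^ (m * b + 1) + m - s) = (s + 1) * b ^ (m * b + 1) + m := by
    omega
  have hgad : m + m * (b - 1) = m * b := by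
    have hb1 : b - 1 + 1 = b := by omega
    calc m + m * (b - 1) = m * ((b - 1) + 1) := by ring
      _ = m * b := by rw [hb1]
  have hMt : M + ((s + 1) * b ^ (m * b + 1) + m - s)
      = (s + 1) * b ^ (m * b + 1) + m * b := by
    calc M + ((s+1) * b ^ (m*b+1) + m - s)
        = (s + m * (b-1)) + ((s+1) * b ^ (m*b+1) + m - s) := by rw [hMs]
      _ = (s + ((s+1) * b ^ (m*b+1) + m - s)) + m * (b-1) := by omega
      _ = ((s+1) * b ^ (m*b+1) + m) + m * (b-1) := by rw [hst]
      _ = (s+1) * b ^ (m*b+1) + (m + m * (b-1)) := by ring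
      _ = (s+1) * b ^ (m*b+1) + m * b := by rw [hgad]
  rw [hst, hMt, sq_pow_mul_add b hb (s+1) (m*b+1) m hmL,
     sq_pow_mul_add b hb (s+1) (m*b+1) (m*b) hmbL]
  congr 1
  rw [show m * b = b * m + 0 from by ring, sq_mul_add b hb m 0 (by omega)]
  simp

lemma collapse (b c du x y : ℕ) (hb : 2 ≤ b) (hd : du = Nat.gcd 2 (b - 1))
    (hxy : x < y) (hcong : x ≡ y [MOD du]) :
    ∃ t₀ t₁, c + sq b (c + sq b (x + t₀) + t₁) = c + sq b (c + sq b (y + t₀) + t₁) := by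
  set Δ := y - x with hΔdef
  have hΔ : 0 < Δ := by omega
  set K := Δ with hKdef
  have hK : Δ < b ^ K := Nat.lt_pow_self (by omega)
  set z := b ^ K - Δ with hzdef
  have hz1 : 0 < z := by omega
  have hz2 : z < b ^ K := by omega
  have hzΔ : z + Δ = b ^ K := by omega
  have hP : 0 < sq b z := sq_pos b hb z hz1
  set P := sq b z with hPdef
  -- find the digit q
  have hq : ∃ q, q + 2 ≤ b ∧ (2 * q + 1) ≡ P [MOD b - 1] := by
    rcases Nat.even_or_odd b with hbe | hbo
    · -- b even
      obtain ⟨bh, hbh⟩ := hbe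
      refine ⟨((P - 1) * bh) % (b - 1), by
        have := Nat.mod_lt ((P-1)*bh) (show 0 < b - 1 by omega); omega, ?_⟩
      have e1 : 2 * (((P - 1) * bh) % (b - 1)) ≡ 2 * ((P - 1) * bh) [MOD b - 1] :=
        (Nat.mod_modEq _ _).mul_left 2
      have e2 : 2 * ((P - 1) * bh) = (P - 1) * b := by rw [hbh]; ring
      have e3 : (P - 1) * b ≡ (P - 1) * 1 [MOD b - 1] :=
        Nat.ModEq.mul_left _ (((Nat.modEq_iff_dvd' (by omega)).2 dvd_rfl).symm)
      calc 2 * (((P-1)*bh) % (b-1)) + 1 ≡ 2 * ((P-1)*bh) + 1 [MOD b-1] := e1.add_right 1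
        _ = (P-1)*b + 1 := by rw [e2]
        _ ≡ (P-1)*1 + 1 [MOD b-1] := e3.add_right 1
        _ = P := by omega
    · -- b odd
      obtain ⟨bh, hbh⟩ := hbo
      have hdu : du = 2 := by
        rw [hd]; exact Nat.gcd_eq_left ⟨bh, by omega⟩
      have hΔe : 2 ∣ Δ := by
        have hc := hcong; rw [hdu] at hc
        unfold Nat.ModEq at hc
        omega
      have hbKodd : b ^ K % 2 = 1 := by
        rw [Nat.pow_mod, show b % 2 = 1 by omega]
        simp
      have hzodd : z % 2 = 1 := by omega
      have hPodd : P % 2 = 1 := by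
        have hmz := sq_modEq b 2 hb dvd_rfl ⟨bh, by omega⟩ z
        unfold Nat.ModEq at hmz
        rw [hPdef]
        omega
      set r := (P - 1) % (b - 1) with hrdef
      have hre : 2 ∣ r := by
        have h1 := Nat.mod_add_div (P-1) (b-1)
        have h2 : 2 ∣ (b-1) * ((P-1)/(b-1)) := Dvd.dvd.mul_right ⟨bh, by omega⟩ _
        omega
      have hrlt : r < b - 1 := Nat.mod_lt _ (by omega)
      refine ⟨r / 2, by omega, ?_⟩
      calc 2 * (r / 2) + 1 = r + 1 := by omega
        _ ≡ (P - 1) + 1 [MOD b - 1] := (Nat.mod_modEq _ _).add_right 1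
        _ = P := by omega
  obtain ⟨q, hq1, hq2⟩ := hq
  -- construction of t₀
  set Y := x + 1 with hYdef
  set X := b * Y + q with hXdef
  set e := X * b ^ K + z with hedef
  have hbK1 : (1:ℕ) ≤ b ^ K := Nat.one_le_pow _ _ (by omega)
  have hxe : x ≤ e := by
    have h1 : X ≤ X * b ^ K := Nat.le_mul_of_pos_right X (by omega)
    have h2 : Y ≤ b * Y := Nat.le_mul_of_pos_left Y (by omega)
    omega
  set t₀ := e - x with ht₀def
  have hxt : x + t₀ = e := by omega
  have hyt : y + t₀ = (X + 1) * b ^ K := by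
    have h0 : y + t₀ = e + Δ := by omega
    rw [h0, hedef]
    calc X * b ^ K + z + Δ = X * b ^ K + (z + Δ) := by ring
      _ = X * b ^ K + b ^ K := by rw [hzΔ]
      _ = (X + 1) * b ^ K := by ring
  have hsqx : sq b (x + t₀) = q ^ 2 + sq b Y + P := by
    rw [hxt, hedef, sq_pow_mul_add b hb X K z hz2, hXdef,
      sq_mul_add b hb Y q (by omega), ← hPdef]
  have hsqy : sq b (y + t₀) = (q + 1) ^ 2 + sq b Y := by
    have hX1 : X + 1 = b * Y + (q + 1) := by rw [hXdef, Nat.add_assoc]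
    rw [hyt, show (X + 1) * b ^ K = (X + 1) * b ^ K + 0 from by omega,
      sq_pow_mul_add b hb (X+1) K 0 (by omega), sq_zero, hX1,
      sq_mul_add b hb Y (q+1) (by omega)]
    omega
  -- the two values after the first move
  set α := c + sq b (x + t₀) with hαdef
  set β := c + sq b (y + t₀) with hβdef
  have hαval : α = c + (q ^ 2 + sq b Y + P) := by rw [hαdef, hsqx]
  have hβval : β = c + ((q + 1) ^ 2 + sq b Y) := by rw [hβdef, hsqy]
  have hkey : β + P = α + (2 * q + 1) := by rw [hαval, hβval]; ring
  have h1 : ((b-1 : ℕ):ℤ) ∣ (P:ℤ) - ((2*q+1 : ℕ):ℤ) := hq2.dvd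
  have h2 : (α:ℤ) - (β:ℤ) = (P:ℤ) - ((2*q+1 : ℕ):ℤ) := by
    have hk := hkey
    push_cast at hk ⊢
    linarith
  have hfin : ∃ t₁, sq b (α + t₁) = sq b (β + t₁) := by
    rcases le_total α β with h | h
    · have hzd : ((b-1:ℕ):ℤ) ∣ (β:ℤ) - (α:ℤ) := by
        have h3 := dvd_neg.mpr h1
        rw [neg_sub] at h3
        have h4 : (β:ℤ) - α = ((2*q+1:ℕ):ℤ) - P := by linarith
        rw [h4]; exact h3
      have hdN : (b-1) ∣ (β - α) := by
        have hc : ((β - α : ℕ):ℤ) = (β:ℤ) - α := by push_cast [h]; ring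
        rw [← hc] at hzd
        exact_mod_cast hzd
      obtain ⟨t₁, ht⟩ := gadget b hb α β h hdN
      exact ⟨t₁, ht⟩
    · have hzd : ((b-1:ℕ):ℤ) ∣ (α:ℤ) - (β:ℤ) := by rw [h2]; exact h1
      have hdN : (b-1) ∣ (α - β) := by
        have hc : ((α - β : ℕ):ℤ) = (α:ℤ) - β := by push_cast [h]; ring
        rw [← hc] at hzd
        exact_mod_cast hzd
      obtain ⟨t₁, ht⟩ := gadget b hb β α h hdN
      exact ⟨t₁, ht.symm⟩
  obtain ⟨t₁, ht₁⟩ := hfin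
  exact ⟨t₀, t₁, by rw [← hαdef, ← hβdef, ht₁]⟩

lemma main_aux (c b u : ℕ) (hb : 2 ≤ b) (hu : inU c b u) (du : ℕ)
    (hd : du = Nat.gcd 2 (b - 1)) :
    ∀ n (F : Finset ℕ), F.card ≤ n → (∀ x ∈ F, ∀ y ∈ F, x ≡ y [MOD du]) →
      ∃ t, ∀ w ∈ F, ∃ k, (S c b)^[k] (w + t) = u := by
  have hd2 : du ∣ 2 := hd ▸ Nat.gcd_dvd_left _ _
  have hdb : du ∣ b - 1 := hd ▸ Nat.gcd_dvd_right _ _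
  intro n
  induction n with
  | zero =>
    intro F hF _
    have hFe : F = ∅ := Finset.card_eq_zero.mp (Nat.le_antisymm hF (Nat.zero_le _))
    exact ⟨0, by simp [hFe]⟩
  | succ n ih =>
    intro F hcard hcong
    by_cases h1 : F.card ≤ 1
    · rcases Finset.eq_empty_or_nonempty F with rfl | ⟨x, hx⟩
      · exact ⟨0, by simp⟩
      · obtain ⟨v, hvk, hxv⟩ := exists_A_ge c b u hb hu x
        refine ⟨v - x, ?_⟩
        intro w hw
        have hwx : w = x := Finset.card_le_one.mp h1 w hw x hx
        subst hwx
        rw [show w + (v - w) = v from by omega]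
        exact hvk
    · have h2 : 1 < F.card := by omega
      have hne : F.Nonempty := by
        rw [← Finset.card_pos]; omega
      have hxF := F.min'_mem hne
      have hyF := F.max'_mem hne
      have hxy : F.min' hne < F.max' hne := F.min'_lt_max'_of_card h2
      obtain ⟨t₀, t₁, heq⟩ := collapse b c du (F.min' hne) (F.max' hne) hb hd hxy
        (hcong _ hxF _ hyF)
      set g : ℕ → ℕ := fun w => c + sq b (c + sq b (w + t₀) + t₁) with hg
      set F₂ := (F.erase (F.min' hne)).image g with hF₂
      have hcard₂ : F₂.card ≤ n := by
        calc F₂.card ≤ (F.erase (F.min' hne)).card := Finset.card_image_le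
          _ = F.card - 1 := Finset.card_erase_of_mem hxF
          _ ≤ n := by omega
      have hgcong : ∀ w ∈ F, ∀ w' ∈ F, g w ≡ g w' [MOD du] := by
        intro w hw w' hw'
        have hww' := hcong w hw w' hw'
        have e1 : sq b (w + t₀) ≡ sq b (w' + t₀) [MOD du] :=
          ((sq_modEq b du hb hd2 hdb (w + t₀)).trans (hww'.add_right t₀)).trans
            (sq_modEq b du hb hd2 hdb (w' + t₀)).symm
        have e2 : c + sq b (w + t₀) + t₁ ≡ c + sq b (w' + t₀) + t₁ [MOD du] :=
          (e1.add_left c).add_right t₁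
        have e3 : sq b (c + sq b (w + t₀) + t₁) ≡ sq b (c + sq b (w' + t₀) + t₁) [MOD du] :=
          ((sq_modEq b du hb hd2 hdb _).trans e2).trans (sq_modEq b du hb hd2 hdb _).symm
        exact e3.add_left c
      have hcong₂ : ∀ a ∈ F₂, ∀ a' ∈ F₂, a ≡ a' [MOD du] := by
        intro a ha a' ha'
        obtain ⟨w, hw, rfl⟩ := Finset.mem_image.mp ha
        obtain ⟨w', hw', rfl⟩ := Finset.mem_image.mp ha'
        exact hgcong w (Finset.mem_of_mem_erase hw) w' (Finset.mem_of_mem_erase hw')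
      obtain ⟨t₂, ht₂⟩ := ih F₂ hcard₂ hcong₂
      have hmemF₂ : ∀ w ∈ F, g w ∈ F₂ := by
        intro w hw
        by_cases hwx : w = F.min' hne
        · have hgw : g w = g (F.max' hne) := by rw [hwx]; exact heq
          rw [hgw]
          exact Finset.mem_image_of_mem g (Finset.mem_erase.mpr ⟨by omega, hyF⟩)
        · exact Finset.mem_image_of_mem g (Finset.mem_erase.mpr ⟨hwx, hw⟩)
      -- undo the two moves
      have step1 : ∃ t', ∀ v ∈ F.image (fun w => c + sq b (w + t₀)), ∃ k,
          (S c b)^[k] (c + sq b (v + t₁) + t') = u := by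
        refine ⟨t₂, ?_⟩
        intro v hv
        obtain ⟨w, hw, rfl⟩ := Finset.mem_image.mp hv
        exact ht₂ _ (hmemF₂ w hw)
      obtain ⟨t'', ht''⟩ := move c b u hb _ t₁ step1
      refine move c b u hb F t₀ ⟨t'', ?_⟩
      intro w hw
      exact ht'' _ (Finset.mem_image_of_mem _ hw)

end Stmt11

theorem stmt_11 (c b : ℕ) (hb : 2 ≤ b) (u : ℕ) (hu : inU c b u)
    (d : ℕ) (hd : d = Nat.gcd 2 (b - 1)) :
    ∀ N : ℕ, 0 < N → ∃ n : ℕ, 0 < n ∧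
      ∀ i : ℕ, i < N → ∃ k : ℕ, (S c b)^[k] (n + i * d) = u := by
  intro N hN
  have hd2 : d ∣ 2 := hd ▸ Nat.gcd_dvd_left _ _
  have hdpos : 0 < d := Nat.pos_of_dvd_of_pos hd2 (by norm_num)
  set F := (Finset.range N).image (fun i => (i + 1) * d) with hF
  have hcong : ∀ a ∈ F, ∀ a' ∈ F, a ≡ a' [MOD d] := by
    intro a ha a' ha'
    obtain ⟨i, _, rfl⟩ := Finset.mem_image.mp ha
    obtain ⟨j, _, rfl⟩ := Finset.mem_image.mp ha'
    show (i + 1) * d ≡ (j + 1) * d [MOD d]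
    unfold Nat.ModEq
    rw [Nat.mul_mod_left, Nat.mul_mod_left]
  obtain ⟨t, ht⟩ := Stmt11.main_aux c b u hb hu d hd F.card F le_rfl hcong
  refine ⟨d + t, by omega, ?_⟩
  intro i hiN
  have hmem : (i + 1) * d ∈ F :=
    Finset.mem_image_of_mem _ (Finset.mem_range.mpr hiN)
  obtain ⟨k, hk⟩ := ht _ hmem
  refine ⟨k, ?_⟩
  have harg : d + t + i * d = (i + 1) * d + t := by ring
  rw [harg]
  exact hk
end

section
/- Fix integers c ≥ 0 and b ≥ 2 with b even, and let u ∈ U_{[c,b]}. Then there exist arbitrarily long finite sequences of consecutive u-attracted numbers for S_{[c,b]}: for every positive integer N there exists a positive integer n such that n, n + 1, …, n + N - 1 are all u-attracted. -/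
namespace Stmt12

/-- Sum of squares of base-`b` digits. -/
def ssd (b x : ℕ) : ℕ := ((Nat.digits b x).map (· ^ 2)).sum

lemma S_eq (c b a : ℕ) : S c b a = c + ssd b a := rfl

lemma ssd_zero (b : ℕ) : ssd b 0 = 0 := by simp [ssd]

lemma ssd_cons {b : ℕ} (hb : 2 ≤ b) (y : ℕ) : ssd b y = (y % b) ^ 2 + ssd b (y / b) := by
  rcases Nat.eq_zero_or_pos y with rfl | h
  · simp [ssd]
  · unfold ssd
    rw [Nat.digits_def' (show 1 < b by omega) h]
    simp

lemma ssd_digit {b d : ℕ} (hb : 2 ≤ b) (hd : d < b) : ssd b d = d ^ 2 := by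
  rw [ssd_cons hb, Nat.mod_eq_of_lt hd, Nat.div_eq_of_lt hd, ssd_zero]
  omega

lemma ssd_split {b : ℕ} (hb : 2 ≤ b) (x : ℕ) : ∀ L y, y < b ^ L →
    ssd b (x * b ^ L + y) = ssd b x + ssd b y := by
  intro L
  induction L with
  | zero =>
    intro y hy
    rw [pow_zero] at hy
    have hy0 : y = 0 := by omega
    subst hy0
    simp [ssd_zero]
  | succ L ih =>
    intro y hy
    have hb0 : 0 < b := by omega
    have hyb : y / b < b ^ L := by
      apply Nat.div_lt_of_lt_mul
      rw [← pow_succ']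
      exact hy
    have hre : x * b ^ (L + 1) + y = b * (x * b ^ L) + y := by ring
    have hmod : (x * b ^ (L + 1) + y) % b = y % b := by
      rw [hre, Nat.mul_add_mod]
    have hdiv : (x * b ^ (L + 1) + y) / b = x * b ^ L + y / b := by
      rw [hre, Nat.mul_add_div hb0]
    rw [ssd_cons hb (x * b ^ (L + 1) + y), hmod, hdiv, ih _ hyb, ssd_cons hb y]
    ring

lemma ssd_mul_pow {b : ℕ} (hb : 2 ≤ b) (x L : ℕ) : ssd b (x * b ^ L) = ssd b x := by
  have h := ssd_split hb x L 0 (pow_pos (by omega) L)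
  simpa [ssd_zero] using h

lemma ssd_pow {b : ℕ} (hb : 2 ≤ b) (K : ℕ) : ssd b (b ^ K) = 1 := by
  have h := ssd_mul_pow hb 1 K
  rw [one_mul] at h
  rw [h, ssd_digit hb (by omega : 1 < b)]
  exact one_pow 2

lemma ssd_pos {b : ℕ} (hb : 2 ≤ b) (x : ℕ) : 0 < x → 0 < ssd b x := by
  induction x using Nat.strong_induction_on with
  | _ x ih =>
    intro hx
    rw [ssd_cons hb x]
    rcases Nat.lt_or_ge x b with h | h
    · rw [Nat.mod_eq_of_lt h]
      have h2 : 0 < x ^ 2 := by positivity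
      omega
    · have h1 : 0 < x / b := Nat.div_pos h (by omega)
      have h2 : x / b < x := Nat.div_lt_self hx (by omega)
      have h3 := ih (x / b) h2 h1
      omega

lemma ssd_pred_pow {b : ℕ} (hb : 2 ≤ b) : ∀ K, ssd b (b ^ K - 1) = K * (b - 1) ^ 2 := by
  intro K
  induction K with
  | zero => simp [ssd_zero]
  | succ K ih =>
    have h1 : 0 < b ^ K := pow_pos (by omega) K
    have h2 : b ^ (K + 1) = b * b ^ K := by rw [pow_succ, mul_comm]
    have h3 : (b - 1) * b ^ K + 1 * b ^ K = b * b ^ K := by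
      rw [← add_mul]
      congr 1
      omega
    have h4 : b ^ (K + 1) - 1 = (b - 1) * b ^ K + (b ^ K - 1) := by omega
    rw [h4, ssd_split hb (b - 1) K _ (by omega), ssd_digit hb (by omega), ih]
    ring

/-- repunit with `t` one-digits. -/
def rep (b : ℕ) : ℕ → ℕ
  | 0 => 0
  | t + 1 => 1 + b * rep b t

lemma rep_pos {b t : ℕ} (ht : 0 < t) : 0 < rep b t := by
  cases t with
  | zero => omega
  | succ t =>
    show 0 < 1 + b * rep b t
    omega

lemma ssd_rep {b : ℕ} (hb : 2 ≤ b) : ∀ t, ssd b (rep b t) = t := by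
  intro t
  induction t with
  | zero => simp [rep, ssd_zero]
  | succ t ih =>
    have hb0 : 0 < b := by omega
    show ssd b (1 + b * rep b t) = t + 1
    rw [ssd_cons hb, Nat.add_mul_mod_self_left, Nat.add_mul_div_left _ _ hb0,
      Nat.mod_eq_of_lt (by omega : 1 < b), Nat.div_eq_of_lt (by omega : 1 < b)]
    simp only [one_pow, Nat.zero_add, ih]
    omega

lemma ssd_pow_sub {b : ℕ} (hb : 2 ≤ b) (K₀ Δ : ℕ) (hΔ1 : 1 ≤ Δ) (hΔ : Δ ≤ b ^ K₀) :
    ∀ j, ssd b (b ^ (K₀ + j) - Δ) = ssd b (b ^ K₀ - Δ) + j * (b - 1) ^ 2 := by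
  intro j
  induction j with
  | zero => simp
  | succ j ih =>
    have hmono : b ^ K₀ ≤ b ^ (K₀ + j) := Nat.pow_le_pow_right (by omega) (by omega)
    have h1 : b ^ (K₀ + (j + 1)) = b * b ^ (K₀ + j) := by
      rw [← add_assoc, pow_succ, mul_comm]
    have h2 : (b - 1) * b ^ (K₀ + j) + 1 * b ^ (K₀ + j) = b * b ^ (K₀ + j) := by
      rw [← add_mul]
      congr 1
      omega
    have h3 : b ^ (K₀ + (j + 1)) - Δ = (b - 1) * b ^ (K₀ + j) + (b ^ (K₀ + j) - Δ) := by omega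
    rw [h3, ssd_split hb (b - 1) (K₀ + j) _ (by omega), ssd_digit hb (by omega), ih]
    ring

lemma pow_lin (B : ℕ) : ∀ n, ∃ s, (B + 1) ^ n = 1 + B * n + B ^ 2 * s := by
  intro n
  induction n with
  | zero => exact ⟨0, by simp⟩
  | succ n ih =>
    obtain ⟨s, hs⟩ := ih
    exact ⟨s + n + B * s, by rw [pow_succ, hs]; ring⟩

lemma E2lem {b : ℕ} (hb : 2 ≤ b) (u₀ : ℕ) :
    ∃ dstar k : ℕ, k * (b - 1) ^ 2 + (b - 1) * u₀ + b ^ 2 = b ^ 2 * b ^ dstar := by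
  obtain ⟨B, rfl⟩ : ∃ B, b = B + 1 := ⟨b - 1, by omega⟩
  simp only [Nat.add_sub_cancel]
  obtain ⟨s, hs⟩ := pow_lin B ((u₀ + 1) * B + u₀)
  exact ⟨(u₀ + 1) * B + u₀, (u₀ + 1) + (B + 2) * ((u₀ + 1) * B + u₀) + (B + 1) ^ 2 * s,
    by rw [hs]; ring⟩

lemma exists_dm {b W : ℕ} (hb : 2 ≤ b) (hbe : Even b) (hW : 2 * b ≤ W) :
    ∃ d u₀ : ℕ, d + 1 < b ∧ W = 2 * d + 1 + (b - 1) * u₀ := by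
  obtain ⟨t, ht⟩ := hbe
  have hdm : (b - 1) * (t * (W - 1) / (b - 1)) + t * (W - 1) % (b - 1) = t * (W - 1) :=
    Nat.div_add_mod _ _
  set q0 := t * (W - 1) / (b - 1) with hq0def
  set d := t * (W - 1) % (b - 1) with hddef
  have hdB : d < b - 1 := Nat.mod_lt _ (by omega)
  have hd4 : 2 * d + 4 ≤ W := by omega
  have h3 : ((b : ℤ) - 1) * (q0 : ℤ) + (d : ℤ) = (t : ℤ) * ((W : ℤ) - 1) := by
    have h := hdm
    zify [show 1 ≤ b by omega, show 1 ≤ W by omega] at h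
    linarith [h]
  have h2 : (b : ℤ) = (t : ℤ) + (t : ℤ) := by exact_mod_cast ht
  have key : ((W : ℤ) - 1) - 2 * (d : ℤ) = ((b : ℤ) - 1) * (2 * (q0 : ℤ) - ((W : ℤ) - 1)) := by
    linear_combination (-2 : ℤ) * h3 + ((W : ℤ) - 1) * h2
  have hbp : (0 : ℤ) < (b : ℤ) - 1 := by omega
  have hApos : (0 : ℤ) < ((W : ℤ) - 1) - 2 * (d : ℤ) := by omega
  have hzpos : (0 : ℤ) < 2 * (q0 : ℤ) - ((W : ℤ) - 1) := by
    rcases le_or_gt (2 * (q0 : ℤ) - ((W : ℤ) - 1)) 0 with hle | hlt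
    · exfalso
      nlinarith [key, hApos, mul_nonneg hbp.le (neg_nonneg.mpr hle)]
    · exact hlt
  refine ⟨d, (2 * (q0 : ℤ) - ((W : ℤ) - 1)).toNat, by omega, ?_⟩
  have htn : ((2 * (q0 : ℤ) - ((W : ℤ) - 1)).toNat : ℤ) = 2 * (q0 : ℤ) - ((W : ℤ) - 1) :=
    Int.toNat_of_nonneg hzpos.le
  have hfin : (W : ℤ) = 2 * (d : ℤ) + 1 +
      ((b : ℤ) - 1) * ((2 * (q0 : ℤ) - ((W : ℤ) - 1)).toNat : ℤ) := by
    rw [htn]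
    linarith [key]
  zify [show 1 ≤ b by omega]
  linarith [hfin]

lemma merge {b : ℕ} (hb : 2 ≤ b) (hbe : Even b) (q q' : ℕ) (hlt : q < q') :
    ∃ e₁ e₂ : ℕ, ssd b (e₂ + ssd b (e₁ + q)) = ssd b (e₂ + ssd b (e₁ + q')) := by
  have hb1 : 1 < b := by omega
  obtain ⟨Δ, hΔdef⟩ : ∃ Δ, q' = q + Δ := ⟨q' - q, by omega⟩
  have hΔ1 : 1 ≤ Δ := by omega
  obtain ⟨K₀, hK₀⟩ : ∃ K₀, K₀ = Δ + q + 1 := ⟨_, rfl⟩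
  have hq0 : Δ + q < b ^ K₀ := by
    rw [hK₀]
    exact lt_trans (Nat.lt_succ_self _) (Nat.lt_pow_self hb1)
  obtain ⟨K, hK⟩ : ∃ K, K = K₀ + 2 * b := ⟨_, rfl⟩
  have hKK : b ^ K₀ ≤ b ^ K := by
    rw [hK]
    exact Nat.pow_le_pow_right (by omega) (by omega)
  have hqK : Δ + q < b ^ K := lt_of_lt_of_le hq0 hKK
  obtain ⟨y, hy⟩ : ∃ y, b ^ K = y + Δ := ⟨b ^ K - Δ, by omega⟩
  have hyq : q < y := by omega
  have hWval : ssd b y = ssd b (b ^ K₀ - Δ) + (2 * b) * (b - 1) ^ 2 := by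
    have h5 : b ^ K - Δ = y := by omega
    rw [← h5, hK]
    exact ssd_pow_sub hb K₀ Δ hΔ1 (by omega) (2 * b)
  have hWbig : 2 * b ≤ ssd b y := by
    have h6 : 2 * b * 1 ≤ 2 * b * ((b - 1) ^ 2) :=
      Nat.mul_le_mul_left (2 * b) (Nat.one_le_pow _ _ (by omega))
    omega
  obtain ⟨d, u₀, hd1, hE1⟩ := exists_dm hb hbe hWbig
  obtain ⟨dstar, k, hE2⟩ := E2lem hb u₀
  have hbk1 : 1 ≤ b ^ k := Nat.one_le_pow _ _ (by omega)
  obtain ⟨z, hz⟩ : ∃ z, b ^ k = z + 1 := ⟨b ^ k - 1, by omega⟩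
  obtain ⟨vm, hvm⟩ : ∃ vm, vm = d * b ^ k + z := ⟨_, rfl⟩
  have hveq : vm + 1 = (d + 1) * b ^ k := by rw [hvm, hz]; ring
  obtain ⟨x₁, hx₁⟩ : ∃ x₁, x₁ = vm * b ^ K + y := ⟨_, rfl⟩
  have hqx : q ≤ x₁ := by
    have h7 : y ≤ vm * b ^ K + y := Nat.le_add_left _ _
    omega
  have he₁q : x₁ - q + q = x₁ := by omega
  have he₁q' : x₁ - q + q' = (vm + 1) * b ^ K := by
    have h8 : (vm + 1) * b ^ K = vm * b ^ K + b ^ K := by ring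
    omega
  have hyK : y < b ^ K := by omega
  have hzk : z < b ^ k := by omega
  have hsx : ssd b x₁ = d ^ 2 + k * (b - 1) ^ 2 + ssd b y := by
    rw [hx₁, ssd_split hb vm K y hyK, hvm, ssd_split hb d k z hzk,
      ssd_digit hb (by omega : d < b), (show z = b ^ k - 1 by omega), ssd_pred_pow hb k]
  have P1 : ssd b x₁ + b ^ 2 = (d + 1) ^ 2 + b ^ 2 * b ^ dstar := by
    calc ssd b x₁ + b ^ 2 = (d + 1) ^ 2 + (k * (b - 1) ^ 2 + (b - 1) * u₀ + b ^ 2) := by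
          rw [hsx, hE1]; ring
      _ = (d + 1) ^ 2 + b ^ 2 * b ^ dstar := by rw [hE2]
  have hle2 : (d + 1) ^ 2 ≤ b ^ 2 := Nat.pow_le_pow_left (by omega) 2
  have hsv : ssd b ((vm + 1) * b ^ K) = (d + 1) ^ 2 := by
    rw [hveq, ssd_mul_pow hb, ssd_mul_pow hb, ssd_digit hb hd1]
  refine ⟨x₁ - q, b ^ 2 - (d + 1) ^ 2, ?_⟩
  rw [he₁q, he₁q', hsv]
  have hL : b ^ 2 - (d + 1) ^ 2 + ssd b x₁ = b ^ 2 * b ^ dstar := by omega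
  have hR : b ^ 2 - (d + 1) ^ 2 + (d + 1) ^ 2 = b ^ 2 := by omega
  rw [hL, hR, ← pow_add, ssd_pow hb, ssd_pow hb]

/-- `x` is attracted to `u`. -/
def Att (c b u x : ℕ) : Prop := ∃ k, (S c b)^[k] x = u

lemma att_step {c b u x : ℕ} (h : Att c b u (S c b x)) : Att c b u x := by
  obtain ⟨k, hk⟩ := h
  exact ⟨k + 1, by rw [Function.iterate_succ_apply]; exact hk⟩

/-- `c + v` is attracted to `u`. -/
def Good (c b u v : ℕ) : Prop := Att c b u (c + v)

lemma good_closure {c b u v : ℕ} (h : Good c b u (ssd b (c + v))) : Good c b u v := by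
  apply att_step
  rw [S_eq]
  exact h

lemma iter_pos {c b : ℕ} (hb : 2 ≤ b) (x : ℕ) (hx : 0 < x) : ∀ k, 0 < (S c b)^[k] x := by
  intro k
  induction k with
  | zero => exact hx
  | succ k ih =>
    rw [Function.iterate_succ_apply']
    have h := ssd_pos hb _ ih
    rw [S_eq]
    omega

lemma good_base {c b u : ℕ} (hb : 2 ≤ b) (hu : inU c b u) :
    c < u ∧ Good c b u (u - c) := by
  obtain ⟨hu0, m, hm, hit⟩ := hu
  have hw : 0 < (S c b)^[m - 1] u := iter_pos hb u hu0 (m - 1)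
  have hmu : S c b ((S c b)^[m - 1] u) = u := by
    have h9 := hit
    rw [show m = m - 1 + 1 by omega, Function.iterate_succ_apply'] at h9
    exact h9
  have hs : 0 < ssd b ((S c b)^[m - 1] u) := ssd_pos hb _ hw
  have hcu : c < u := by
    rw [← hmu, S_eq]
    omega
  refine ⟨hcu, ?_⟩
  show Att c b u (c + (u - c))
  rw [show c + (u - c) = u by omega]
  exact ⟨0, rfl⟩

lemma good_large {c b u : ℕ} (hb : 2 ≤ b) (hu : inU c b u) (W : ℕ) :
    ∃ g, W ≤ g ∧ Good c b u g := by
  obtain ⟨hcu, hgood⟩ := good_base hb hu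
  have hKp : c + W < b ^ (c + W + 1) :=
    lt_trans (Nat.lt_succ_self _) (Nat.lt_pow_self (by omega : 1 < b))
  have h1 : 0 < rep b (u - c) := rep_pos (by omega)
  have h2 : b ^ (c + W + 1) ≤ rep b (u - c) * b ^ (c + W + 1) := Nat.le_mul_of_pos_left _ h1
  refine ⟨rep b (u - c) * b ^ (c + W + 1) - c, by omega, ?_⟩
  apply good_closure
  rw [show c + (rep b (u - c) * b ^ (c + W + 1) - c) = rep b (u - c) * b ^ (c + W + 1) by omega,
    ssd_mul_pow hb, ssd_rep hb]
  exact hgood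

lemma round {c b u : ℕ} (hb : 2 ≤ b) (Q : Finset ℕ) (e s' : ℕ) (hs' : 1 ≤ s')
    (h : ∀ q ∈ Q, Good c b u (s' + ssd b (e + q))) :
    ∃ s, 1 ≤ s ∧ ∀ q ∈ Q, Good c b u (s + q) := by
  have hPb : e + Q.sup id + c + 1 ≤ b ^ (e + Q.sup id + c + 1) :=
    (Nat.lt_pow_self (by omega : 1 < b)).le
  have h1 : 0 < rep b s' := rep_pos hs'
  have h2 : b ^ (e + Q.sup id + c + 1) ≤ rep b s' * b ^ (e + Q.sup id + c + 1) :=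
    Nat.le_mul_of_pos_left _ h1
  refine ⟨rep b s' * b ^ (e + Q.sup id + c + 1) + e - c, by omega, ?_⟩
  intro q hq
  have hqM : q ≤ Q.sup id := Finset.le_sup (f := id) hq
  apply good_closure
  rw [show c + (rep b s' * b ^ (e + Q.sup id + c + 1) + e - c + q) =
      rep b s' * b ^ (e + Q.sup id + c + 1) + (e + q) by omega,
    ssd_split hb _ _ (e + q) (by omega), ssd_rep hb]
  exact h q hq

lemma claimB {c b u : ℕ} (hb : 2 ≤ b) (hbe : Even b) (hu : inU c b u) :
    ∀ r (Q : Finset ℕ), Q.card ≤ r → ∃ s, 1 ≤ s ∧ ∀ q ∈ Q, Good c b u (s + q) := by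
  intro r
  induction r with
  | zero =>
    intro Q hQ
    have hQe : Q = ∅ := Finset.card_eq_zero.mp (by omega)
    subst hQe
    exact ⟨1, le_refl 1, by simp⟩
  | succ r ih =>
    intro Q hQ
    rcases Nat.lt_or_ge Q.card (r + 1) with h | h
    · exact ih Q (by omega)
    · have hcard : Q.card = r + 1 := by omega
      rcases Nat.eq_zero_or_pos r with rfl | hr
      · obtain ⟨a, ha⟩ := Finset.card_eq_one.mp (by omega : Q.card = 1)
        obtain ⟨g, hg1, hg2⟩ := good_large hb hu (a + 1)
        refine ⟨g - a, by omega, ?_⟩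
        intro q hq
        rw [ha, Finset.mem_singleton] at hq
        subst hq
        rw [show g - q + q = g by omega]
        exact hg2
      · have h2 : 1 < Q.card := by omega
        obtain ⟨a, haQ, a', ha'Q, hne⟩ := Finset.one_lt_card.mp h2
        obtain ⟨e₁, e₂, hee⟩ : ∃ e₁ e₂ : ℕ,
            ssd b (e₂ + ssd b (e₁ + a)) = ssd b (e₂ + ssd b (e₁ + a')) := by
          rcases Nat.lt_or_ge a a' with hlt | hge
          · exact merge hb hbe a a' hlt
          · obtain ⟨e₁, e₂, hh⟩ := merge hb hbe a' a (by omega)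
            exact ⟨e₁, e₂, hh.symm⟩
        have himg : (Q.image (fun x => ssd b (e₂ + ssd b (e₁ + x)))).card ≤ r := by
          have hsub : Q.image (fun x => ssd b (e₂ + ssd b (e₁ + x))) ⊆
              (Q.erase a').image (fun x => ssd b (e₂ + ssd b (e₁ + x))) := by
            intro x hx
            obtain ⟨w, hwQ, hwx⟩ := Finset.mem_image.mp hx
            rcases eq_or_ne w a' with rfl | hw
            · exact Finset.mem_image.mpr ⟨a, Finset.mem_erase.mpr ⟨hne, haQ⟩,
                by rw [hee]; exact hwx⟩
            · exact Finset.mem_image.mpr ⟨w, Finset.mem_erase.mpr ⟨hw, hwQ⟩, hwx⟩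
          calc (Q.image (fun x => ssd b (e₂ + ssd b (e₁ + x)))).card
              ≤ ((Q.erase a').image (fun x => ssd b (e₂ + ssd b (e₁ + x)))).card :=
                Finset.card_le_card hsub
            _ ≤ (Q.erase a').card := Finset.card_image_le
            _ = Q.card - 1 := Finset.card_erase_of_mem ha'Q
            _ ≤ r := by omega
        obtain ⟨s₂, hs₂1, hs₂⟩ := ih _ himg
        have hstep2 : ∀ p ∈ Q.image (fun x => ssd b (e₁ + x)),
            Good c b u (s₂ + ssd b (e₂ + p)) := by
          intro p hp
          obtain ⟨w, hwQ, rfl⟩ := Finset.mem_image.mp hp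
          exact hs₂ _ (Finset.mem_image.mpr ⟨w, hwQ, rfl⟩)
        obtain ⟨s₁, hs₁1, hs₁⟩ := round hb (Q.image (fun x => ssd b (e₁ + x))) e₂ s₂ hs₂1 hstep2
        have hstep1 : ∀ p ∈ Q, Good c b u (s₁ + ssd b (e₁ + p)) := by
          intro p hp
          exact hs₁ _ (Finset.mem_image.mpr ⟨p, hp, rfl⟩)
        exact round hb Q e₁ s₁ hs₁1 hstep1

end Stmt12

theorem stmt_12 (c b : ℕ) (hb : 2 ≤ b) (hbe : Even b) (u : ℕ) (hu : inU c b u) :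
    ∀ N : ℕ, 0 < N → ∃ n : ℕ, 0 < n ∧
      ∀ i : ℕ, i < N → ∃ k : ℕ, (S c b)^[k] (n + i) = u := by
  intro N hN
  obtain ⟨s, hs1, hs⟩ := Stmt12.claimB hb hbe hu
    ((Finset.range N).image (Stmt12.ssd b)).card ((Finset.range N).image (Stmt12.ssd b)) le_rfl
  have hLb : N + c + 1 ≤ b ^ (N + c + 1) := (Nat.lt_pow_self (by omega : 1 < b)).le
  have h1 : 0 < Stmt12.rep b s := Stmt12.rep_pos hs1
  have h2 : 0 < b ^ (N + c + 1) := pow_pos (by omega) _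
  refine ⟨Stmt12.rep b s * b ^ (N + c + 1), Nat.mul_pos h1 h2, ?_⟩
  intro i hi
  have hiL : i < b ^ (N + c + 1) := by omega
  have hmem : Stmt12.ssd b i ∈ (Finset.range N).image (Stmt12.ssd b) :=
    Finset.mem_image.mpr ⟨i, Finset.mem_range.mpr hi, rfl⟩
  have hg := hs _ hmem
  have hA : Stmt12.Att c b u (Stmt12.rep b s * b ^ (N + c + 1) + i) := by
    apply Stmt12.att_step
    rw [Stmt12.S_eq, Stmt12.ssd_split hb _ _ i hiL, Stmt12.ssd_rep hb]
    exact hg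
  exact hA
end

section
/- Fix integers c ≥ 0 and b ≥ 2 with b odd, and let u ∈ U_{[c,b]}. Then there exist arbitrarily long finite 2-consecutive sequences of u-attracted numbers for S_{[c,b]}: for every positive integer N there exists a positive integer n such that n, n + 2, n + 4, …, n + 2(N-1) are all u-attracted. -/
def dsum (b a : ℕ) : ℕ := ((Nat.digits b a).map (· ^ 2)).sum

lemma dsum_zero (b : ℕ) : dsum b 0 = 0 := by simp [dsum]

lemma dsum_step (b : ℕ) (hb : 2 ≤ b) (q r : ℕ) (hr : r < b) :
    dsum b (b * q + r) = r ^ 2 + dsum b q := by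
  rcases Nat.eq_zero_or_pos (b * q + r) with h | h
  · have hbq : b * q = 0 := by omega
    have hq : q = 0 := by
      rcases Nat.mul_eq_zero.mp hbq with h' | h' <;> omega
    have hr0 : r = 0 := by omega
    simp [hq, hr0, dsum_zero]
  · rw [dsum, Nat.digits_def' (by omega : 1 < b) h]
    have h1 : (b * q + r) % b = r := by
      rw [Nat.mul_add_mod]; exact Nat.mod_eq_of_lt hr
    have h2 : (b * q + r) / b = q := by
      rw [Nat.mul_add_div (by omega), Nat.div_eq_of_lt hr]
      omega
    rw [h1, h2]; simp [dsum]

lemma dsum_digit (b : ℕ) (hb : 2 ≤ b) (r : ℕ) (hr : r < b) : dsum b r = r ^ 2 := by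
  have := dsum_step b hb 0 r hr
  simpa [dsum_zero] using this

lemma dsum_split (b : ℕ) (hb : 2 ≤ b) :
    ∀ (K : ℕ) (y m : ℕ), y < b ^ K → dsum b (b ^ K * m + y) = dsum b m + dsum b y := by
  intro K
  induction K with
  | zero =>
    intro y m hy
    have : y = 0 := by simpa using hy
    simp [this, dsum_zero]
  | succ K ih =>
    intro y m hy
    have h1 : b ^ (K + 1) * m + y = b * (b ^ K * m + y / b) + y % b := by
      have hdm : y = b * (y / b) + y % b := (Nat.div_add_mod y b).symm
      calc b ^ (K + 1) * m + y = b ^ (K + 1) * m + (b * (y / b) + y % b) := by rw [← hdm]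
        _ = b * (b ^ K * m + y / b) + y % b := by ring
    have hyb : y / b < b ^ K := by
      rw [Nat.div_lt_iff_lt_mul (by omega : 0 < b)]
      calc y < b ^ (K + 1) := hy
        _ = b ^ K * b := by ring
    rw [h1, dsum_step b hb _ _ (Nat.mod_lt _ (by omega)), ih (y / b) m hyb]
    have h2 : dsum b y = (y % b) ^ 2 + dsum b (y / b) := by
      conv_lhs => rw [(Nat.div_add_mod y b).symm]
      exact dsum_step b hb _ _ (Nat.mod_lt _ (by omega))
    omega

lemma dsum_mul_pow (b : ℕ) (hb : 2 ≤ b) (e x : ℕ) : dsum b (b ^ e * x) = dsum b x := by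
  have := dsum_split b hb e 0 x (Nat.pow_pos (n := e) (by omega))
  simpa [dsum_zero] using this

lemma dsum_parity (b : ℕ) (hb : 2 ≤ b) (hbo : Odd b) (x : ℕ) : dsum b x % 2 = x % 2 := by
  induction x using Nat.strong_induction_on with
  | _ x ih =>
    rcases Nat.eq_zero_or_pos x with rfl | hx
    · simp [dsum_zero]
    · obtain ⟨t, ht⟩ := hbo
      have hd : x = b * (x / b) + x % b := (Nat.div_add_mod x b).symm
      have hds : dsum b x = (x % b) ^ 2 + dsum b (x / b) := by
        conv_lhs => rw [hd]
        exact dsum_step b hb _ _ (Nat.mod_lt _ (by omega))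
      have ihh : dsum b (x / b) % 2 = (x / b) % 2 := ih (x / b) (Nat.div_lt_self hx (by omega))
      have hsq : (x % b) ^ 2 % 2 = (x % b) % 2 := by
        rcases Nat.even_or_odd (x % b) with he | ho
        · obtain ⟨w, hw⟩ := he
          have : (x % b) ^ 2 = 2 * (w * (x % b)) := by rw [hw]; ring
          omega
        · obtain ⟨w, hw⟩ := ho
          have : (x % b) ^ 2 = 2 * (w * (x % b) + w) + 1 := by rw [hw]; ring
          omega
      have hbx : b * (x / b) = 2 * (t * (x / b)) + x / b := by rw [ht]; ring
      set A := (x % b) ^ 2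
      set D := dsum b (x / b)
      set q := x / b
      set r := x % b
      set w := t * q
      omega

lemma dsum_pos (b : ℕ) (hb : 2 ≤ b) (x : ℕ) (hx : 0 < x) : 0 < dsum b x := by
  induction x using Nat.strong_induction_on with
  | _ x ih =>
    have hds : dsum b x = (x % b) ^ 2 + dsum b (x / b) := by
      conv_lhs => rw [(Nat.div_add_mod x b).symm]
      exact dsum_step b hb _ _ (Nat.mod_lt _ (by omega))
    rcases Nat.eq_zero_or_pos (x % b) with h0 | hpos
    · have hdvd : x / b > 0 := by
        rcases Nat.eq_zero_or_pos (x / b) with h1 | h1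
        · exfalso
          have hdm := Nat.div_add_mod x b
          rw [h1, Nat.mul_zero] at hdm
          omega
        · exact h1
      have := ih (x / b) (Nat.div_lt_self hx (by omega)) hdvd
      omega
    · have : 0 < (x % b) ^ 2 := by positivity
      omega

lemma dsum_pow_sub_one (b : ℕ) (hb : 2 ≤ b) : ∀ t, dsum b (b ^ t - 1) = t * (b - 1) ^ 2 := by
  intro t
  induction t with
  | zero => simp [dsum_zero]
  | succ t ih =>
    have h1 : 1 ≤ b ^ t := Nat.one_le_pow _ _ (by omega)
    have h3 : 1 ≤ b ^ (t + 1) := Nat.one_le_pow _ _ (by omega)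
    have key : b * (b ^ t - 1) + (b - 1) = b ^ (t + 1) - 1 := by
      zify [h1, (by omega : 1 ≤ b), h3]
      push_cast [pow_succ]
      ring
    rw [← key, dsum_step b hb _ _ (by omega), ih]
    ring

def repu (b : ℕ) : ℕ → ℕ
  | 0 => 0
  | t + 1 => b * repu b t + 1

lemma dsum_repu (b : ℕ) (hb : 2 ≤ b) : ∀ t, dsum b (repu b t) = t := by
  intro t
  induction t with
  | zero => simp [repu, dsum_zero]
  | succ t ih =>
    show dsum b (b * repu b t + 1) = t + 1
    rw [dsum_step b hb _ _ (by omega : 1 < b), ih]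
    simp [one_pow]; omega

lemma le_repu (b : ℕ) (hb : 2 ≤ b) : ∀ t, t ≤ repu b t := by
  intro t
  induction t with
  | zero => simp [repu]
  | succ t ih =>
    show t + 1 ≤ b * repu b t + 1
    have : repu b t ≤ b * repu b t := Nat.le_mul_of_pos_left _ (by omega)
    omega



def Attr (c b u x : ℕ) : Prop := ∃ k, (S c b)^[k] x = u

lemma S_eq (c b a : ℕ) : S c b a = c + dsum b a := rfl

lemma attr_of_S {c b u x : ℕ} (h : Attr c b u (S c b x)) : Attr c b u x := by
  obtain ⟨k, hk⟩ := h
  exact ⟨k + 1, by rw [Function.iterate_succ_apply]; exact hk⟩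

lemma exists_s (c b u : ℕ) (hb : 2 ≤ b) (hu : inU c b u) : ∃ s, 1 ≤ s ∧ u = c + s := by
  obtain ⟨hu0, m, hm, hiter⟩ := hu
  have hpos : ∀ j, 0 < (S c b)^[j] u := by
    intro j
    induction j with
    | zero => simpa using hu0
    | succ j ih =>
      rw [Function.iterate_succ_apply']
      have := dsum_pos b hb _ ih
      rw [S_eq]
      omega
  have h2 : (S c b)^[m] u = S c b ((S c b)^[m - 1] u) := by
    rw [show m = m - 1 + 1 by omega]
    exact Function.iterate_succ_apply' _ _ _
  have hSw : S c b ((S c b)^[m - 1] u) = u := by rw [← h2]; exact hiter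
  rw [S_eq] at hSw
  exact ⟨dsum b ((S c b)^[m - 1] u), dsum_pos b hb _ (hpos (m - 1)), by omega⟩

lemma lift (c b : ℕ) (hb : 2 ≤ b) (u : ℕ) (z : ℕ) (F : Finset ℕ)
    (h : ∀ B, ∃ M, B ≤ M ∧ ∀ p ∈ F.image (fun o => dsum b (z + o)), Attr c b u (M + p)) :
    ∀ B, ∃ M, B ≤ M ∧ ∀ o ∈ F, Attr c b u (M + o) := by
  intro B
  obtain ⟨M', hM'B, hM'⟩ := h (c + 1)
  obtain ⟨m, hm⟩ : ∃ m, m = repu b (M' - c) := ⟨_, rfl⟩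
  have hm1 : 1 ≤ m := by rw [hm]; exact le_trans (by omega) (le_repu b hb (M' - c))
  obtain ⟨K, hK⟩ : ∃ K, K = z + F.sup id + B + 1 := ⟨_, rfl⟩
  have hKpow : K < b ^ K := Nat.lt_pow_self (n := K) (by omega)
  have hmK : b ^ K ≤ b ^ K * m := Nat.le_mul_of_pos_right _ (by omega)
  refine ⟨b ^ K * m + z, by omega, ?_⟩
  intro o ho
  have hsup : o ≤ F.sup id := by simpa using Finset.le_sup (f := id) ho
  have hoK : z + o < b ^ K := by omega
  have hre : b ^ K * m + z + o = b ^ K * m + (z + o) := by omega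
  rw [hre]
  apply attr_of_S
  have hSv : S c b (b ^ K * m + (z + o)) = M' + dsum b (z + o) := by
    rw [S_eq, dsum_split b hb K (z + o) m hoK, hm, dsum_repu b hb]
    omega
  rw [hSv]
  exact hM' _ (Finset.mem_image_of_mem _ ho)

lemma collide (b : ℕ) (hb : 2 ≤ b) (hbo : Odd b) (o₁ o₂ : ℕ) (hlt : o₁ < o₂)
    (hpar : o₁ % 2 = o₂ % 2) :
    ∃ z₁ z₂ : ℕ,
      dsum b (z₂ + dsum b (z₁ + o₁)) = dsum b (z₂ + dsum b (z₁ + o₂)) ∧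
      dsum b (z₁ + o₁) ≠ dsum b (z₁ + o₂) := by
  obtain ⟨tb, htb⟩ := hbo
  have hb3 : 3 ≤ b := by omega
  obtain ⟨δ, hδ⟩ : ∃ d, d = o₂ - o₁ := ⟨_, rfl⟩
  have hδ2 : 2 ≤ δ := by omega
  have hδe : δ % 2 = 0 := by omega
  have hL₀ : δ < b ^ δ := Nat.lt_pow_self (n := δ) (by omega)
  have hpowpos : 1 ≤ b ^ δ := Nat.one_le_pow _ _ (by omega)
  obtain ⟨D₀, hD₀⟩ : ∃ D, D = dsum b (b ^ δ - δ) := ⟨_, rfl⟩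
  have hpow_odd : b ^ δ % 2 = 1 := by
    have h : Odd (b ^ δ) := Odd.pow ⟨tb, by omega⟩
    obtain ⟨w, hw⟩ := h
    omega
  have hD₀par : D₀ % 2 = (b ^ δ - δ) % 2 := by
    rw [hD₀]; exact dsum_parity b hb ⟨tb, by omega⟩ _
  have hD₀odd : D₀ % 2 = 1 := by omega
  have hD₀pos : 0 < D₀ := by rw [hD₀]; exact dsum_pos b hb _ (by omega)
  obtain ⟨ρ, hρdef⟩ : ∃ p, p = (D₀ - 1) % (b - 1) := ⟨_, rfl⟩
  obtain ⟨q₁, hq₁def⟩ : ∃ q, q = (D₀ - 1) / (b - 1) := ⟨_, rfl⟩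
  have hq₁raw : (b - 1) * q₁ + ρ = D₀ - 1 := by
    rw [hρdef, hq₁def]; exact Nat.div_add_mod _ _
  have hρlt : ρ < b - 1 := by rw [hρdef]; exact Nat.mod_lt _ (by omega)
  have hρe : ρ % 2 = 0 := by
    have h1 : (b - 1) * q₁ = 2 * (tb * q₁) := by
      have hh : b - 1 = 2 * tb := by omega
      rw [hh]; ring
    omega
  obtain ⟨a, ha⟩ : ∃ a, a = if ρ = 0 then (b - 1) / 2 else ρ / 2 := ⟨_, rfl⟩
  obtain ⟨q₂, hq₂⟩ : ∃ q, q = if ρ = 0 then 1 else 0 := ⟨_, rfl⟩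
  have ha1 : 1 ≤ a := by rw [ha]; split <;> omega
  have ha2 : a ≤ b - 2 := by rw [ha]; split <;> omega
  have hq₂le : q₂ ≤ 1 := by rw [hq₂]; split <;> omega
  have h2a : 2 * a = (b - 1) * q₂ + ρ := by
    by_cases hρ0 : ρ = 0
    · rw [ha, hq₂, if_pos hρ0, if_pos hρ0]
      omega
    · rw [ha, hq₂, if_neg hρ0, if_neg hρ0]
      omega
  obtain ⟨r, hr⟩ : ∃ r, r = q₂ + (a + 1) ^ 2 + o₁ + o₂ + δ + 2 := ⟨_, rfl⟩
  have hrle : r ≤ r * (b - 1) := Nat.le_mul_of_pos_right _ (by omega)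
  obtain ⟨x, hx⟩ : ∃ x, x = q₁ + r * (b - 1) - q₂ := ⟨_, rfl⟩
  have hxsum : x + q₂ = q₁ + r * (b - 1) := by omega
  have hxge : (a + 1) ^ 2 + 2 ≤ x := by omega
  have hmul : (b - 1) * x + (b - 1) * q₂ = (b - 1) * q₁ + (b - 1) * (r * (b - 1)) := by
    rw [← Nat.mul_add, ← Nat.mul_add, hxsum]
  have hrb : (b - 1) * (r * (b - 1)) = r * (b - 1) ^ 2 := by ring
  have hsq : (a + 1) ^ 2 = a ^ 2 + 2 * a + 1 := by ring
  have hKEY : (a + 1) ^ 2 + (b - 1) * x = a ^ 2 + (D₀ + r * (b - 1) ^ 2) := by omega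
  obtain ⟨L, hL⟩ : ∃ L, L = δ + r := ⟨_, rfl⟩
  have hbLbig : L < b ^ L := Nat.lt_pow_self (n := L) (by omega)
  have hLge : δ + o₂ + 1 ≤ b ^ L := by omega
  have hLpos : 1 ≤ b ^ L := by omega
  have harith : b ^ L - δ = b ^ δ * (b ^ r - 1) + (b ^ δ - δ) := by
    have h1 : 1 ≤ b ^ r := Nat.one_le_pow _ _ (by omega)
    have h2 : b ^ L = b ^ δ * b ^ r := by rw [hL, pow_add]
    have h3 : δ ≤ b ^ δ * b ^ r := by
      have := Nat.le_mul_of_pos_right (b ^ δ) (show 0 < b ^ r by omega)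
      omega
    rw [h2]
    zify [le_of_lt hL₀, h1, h3]
    ring
  have hDL : dsum b (b ^ L - δ) = D₀ + r * (b - 1) ^ 2 := by
    rw [harith, dsum_split b hb δ (b ^ δ - δ) (b ^ r - 1) (by omega),
      dsum_pow_sub_one b hb r, ← hD₀]
    omega
  obtain ⟨X, hX⟩ : ∃ X, X = b ^ L * a + (b ^ L - δ) := ⟨_, rfl⟩
  have hXlow : b ^ L - δ ≤ X := by omega
  have hXge : o₁ ≤ X := by omega
  obtain ⟨z₁, hz₁⟩ : ∃ z, z = X - o₁ := ⟨_, rfl⟩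
  have he₁ : z₁ + o₁ = X := by omega
  have he₂ : z₁ + o₂ = b ^ L * (a + 1) := by
    have h1 : b ^ L * (a + 1) = b ^ L * a + b ^ L := by ring
    omega
  have hp₁ : dsum b (z₁ + o₁) = a ^ 2 + (D₀ + r * (b - 1) ^ 2) := by
    rw [he₁, hX, dsum_split b hb L (b ^ L - δ) a (by omega),
      dsum_digit b hb a (by omega), hDL]
  have hp₂ : dsum b (z₁ + o₂) = (a + 1) ^ 2 := by
    rw [he₂, dsum_mul_pow b hb, dsum_digit b hb (a + 1) (by omega)]
  have hne : dsum b (z₁ + o₁) ≠ dsum b (z₁ + o₂) := by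
    rw [hp₁, hp₂]
    have h2x : 2 * 1 ≤ (b - 1) * x := Nat.mul_le_mul (by omega) (by omega)
    omega
  obtain ⟨z₂, hz₂⟩ : ∃ z, z = x - (a + 1) ^ 2 := ⟨_, rfl⟩
  have hf₁ : z₂ + dsum b (z₁ + o₂) = x := by rw [hp₂]; omega
  have hf₂ : z₂ + dsum b (z₁ + o₁) = b * x := by
    rw [hp₁]
    have hbx : (b - 1) * x + x = b * x := by
      have hh : b - 1 + 1 = b := by omega
      calc (b - 1) * x + x = (b - 1 + 1) * x := by ring
        _ = b * x := by rw [hh]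
    omega
  refine ⟨z₁, z₂, ?_, hne⟩
  rw [hf₁, hf₂]
  simpa [pow_one] using dsum_mul_pow b hb 1 x

lemma main (c b : ℕ) (hb : 2 ≤ b) (hbo : Odd b) (u : ℕ) (hu : inU c b u) :
    ∀ (k : ℕ) (F : Finset ℕ), F.card ≤ k → ∀ ε : ℕ, (∀ o ∈ F, o % 2 = ε) →
      ∀ B, ∃ M, B ≤ M ∧ ∀ o ∈ F, Attr c b u (M + o) := by
  intro k
  induction k with
  | zero =>
    intro F hF ε hε B
    have hFe : F = ∅ := Finset.card_eq_zero.mp (by omega)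
    exact ⟨B, le_refl B, by simp [hFe]⟩
  | succ k ih =>
    intro F hF ε hε B
    by_cases h1 : F.card ≤ 1
    · rcases Nat.lt_or_ge F.card 1 with h0 | h0
      · have hFe : F = ∅ := Finset.card_eq_zero.mp (by omega)
        exact ⟨B, le_refl B, by simp [hFe]⟩
      · have hc1 : F.card = 1 := by omega
        obtain ⟨o, rfl⟩ := Finset.card_eq_one.mp hc1
        obtain ⟨s, hs1, hsu⟩ := exists_s c b u hb hu
        have hepow : B + o < b ^ (B + o) := Nat.lt_pow_self (n := B + o) (by omega)
        have hx1 : b ^ (B + o) ≤ b ^ (B + o) * repu b s :=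
          Nat.le_mul_of_pos_right _ (by have := le_repu b hb s; omega)
        have hattr : Attr c b u (b ^ (B + o) * repu b s) := by
          refine ⟨1, ?_⟩
          rw [Function.iterate_one, S_eq, dsum_mul_pow b hb, dsum_repu b hb]
          omega
        refine ⟨b ^ (B + o) * repu b s - o, by omega, ?_⟩
        intro o' ho'
        rw [Finset.mem_singleton] at ho'
        subst ho'
        rw [show b ^ (B + o') * repu b s - o' + o' = b ^ (B + o') * repu b s by omega]
        exact hattr
    · have h2 : 1 < F.card := by omega
      obtain ⟨a₁, ha₁, a₂, ha₂, hane⟩ := Finset.one_lt_card.mp h2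
      have core : ∀ o₁ o₂, o₁ ∈ F → o₂ ∈ F → o₁ < o₂ →
          ∃ M, B ≤ M ∧ ∀ o ∈ F, Attr c b u (M + o) := by
        intro o₁ o₂ hin₁ hin₂ hltt
        have hpar : o₁ % 2 = o₂ % 2 := by rw [hε o₁ hin₁, hε o₂ hin₂]
        obtain ⟨z₁, z₂, hcol, hnecol⟩ := collide b hb hbo o₁ o₂ hltt hpar
        have hp₁F' : dsum b (z₁ + o₁) ∈ F.image (fun o => dsum b (z₁ + o)) :=
          Finset.mem_image_of_mem _ hin₁
        have hp₂F' : dsum b (z₁ + o₂) ∈ F.image (fun o => dsum b (z₁ + o)) :=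
          Finset.mem_image_of_mem _ hin₂
        have himg : (F.image (fun o => dsum b (z₁ + o))).image (fun p => dsum b (z₂ + p)) =
            ((F.image (fun o => dsum b (z₁ + o))).erase (dsum b (z₁ + o₁))).image
              (fun p => dsum b (z₂ + p)) := by
          apply Finset.Subset.antisymm
          · intro q hq
            obtain ⟨p, hp, rfl⟩ := Finset.mem_image.mp hq
            by_cases hpe : p = dsum b (z₁ + o₁)
            · subst hpe
              exact Finset.mem_image.mpr ⟨dsum b (z₁ + o₂),
                Finset.mem_erase.mpr ⟨Ne.symm hnecol, hp₂F'⟩, hcol.symm⟩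
            · exact Finset.mem_image.mpr ⟨p, Finset.mem_erase.mpr ⟨hpe, hp⟩, rfl⟩
          · exact Finset.image_subset_image (Finset.erase_subset _ _)
        have hcard'' :
            ((F.image (fun o => dsum b (z₁ + o))).image (fun p => dsum b (z₂ + p))).card ≤ k := by
          have c1 : ((F.image (fun o => dsum b (z₁ + o))).image
              (fun p => dsum b (z₂ + p))).card ≤
              ((F.image (fun o => dsum b (z₁ + o))).erase (dsum b (z₁ + o₁))).card := by
            rw [himg]; exact Finset.card_image_le
          have c2 : ((F.image (fun o => dsum b (z₁ + o))).erase (dsum b (z₁ + o₁))).card =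
              (F.image (fun o => dsum b (z₁ + o))).card - 1 :=
            Finset.card_erase_of_mem hp₁F'
          have c3 : (F.image (fun o => dsum b (z₁ + o))).card ≤ F.card :=
            Finset.card_image_le
          have c4 : 1 ≤ (F.image (fun o => dsum b (z₁ + o))).card :=
            Finset.card_pos.mpr ⟨_, hp₁F'⟩
          omega
        have hparF'' : ∀ p ∈ (F.image (fun o => dsum b (z₁ + o))).image
            (fun p => dsum b (z₂ + p)), p % 2 = (z₂ + z₁ + ε) % 2 := by
          intro p hp
          obtain ⟨q, hq, rfl⟩ := Finset.mem_image.mp hp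
          obtain ⟨o, ho, rfl⟩ := Finset.mem_image.mp hq
          have e1 : dsum b (z₁ + o) % 2 = (z₁ + o) % 2 := dsum_parity b hb hbo _
          have e2 : dsum b (z₂ + dsum b (z₁ + o)) % 2 = (z₂ + dsum b (z₁ + o)) % 2 :=
            dsum_parity b hb hbo _
          have e3 : o % 2 = ε := hε o ho
          omega
        have hP'' := ih ((F.image (fun o => dsum b (z₁ + o))).image (fun p => dsum b (z₂ + p)))
          hcard'' ((z₂ + z₁ + ε) % 2) hparF''
        have hP' := lift c b hb u z₂ (F.image (fun o => dsum b (z₁ + o))) hP''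
        exact lift c b hb u z₁ F hP' B
      rcases lt_trichotomy a₁ a₂ with h | h | h
      · exact core a₁ a₂ ha₁ ha₂ h
      · exact absurd h hane
      · exact core a₂ a₁ ha₂ ha₁ h


theorem stmt_13 (c b : ℕ) (hb : 2 ≤ b) (hbo : Odd b) (u : ℕ) (hu : inU c b u) :
    ∀ N : ℕ, 0 < N → ∃ n : ℕ, 0 < n ∧
      ∀ i : ℕ, i < N → ∃ k : ℕ, (S c b)^[k] (n + 2 * i) = u := by
  intro N _
  obtain ⟨M, hM1, hM⟩ := main c b hb hbo u hu
    (((Finset.range N).image (fun i => 2 * i + 2)).card)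
    ((Finset.range N).image (fun i => 2 * i + 2)) le_rfl 0
    (by
      intro o ho
      obtain ⟨i, _, rfl⟩ := Finset.mem_image.mp ho
      omega) 1
  refine ⟨M + 2, by omega, ?_⟩
  intro i hi
  have ho : 2 * i + 2 ∈ (Finset.range N).image (fun i => 2 * i + 2) :=
    Finset.mem_image_of_mem _ (Finset.mem_range.mpr hi)
  obtain ⟨k, hk⟩ := hM _ ho
  exact ⟨k, by rwa [show M + 2 + 2 * i = M + (2 * i + 2) by omega]⟩
end

section
/- Fix integers c ≥ 0 and b ≥ 2 with c even and b odd, and let u ∈ U_{[c,b]}. Then there do not exist two consecutive u-attracted numbers: there is no positive integer a such that both a and a + 1 are u-attracted for S_{[c,b]}. -/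
lemma S_parity (c b a : ℕ) (hc : Even c) (hbo : Odd b) :
    S c b a ≡ a [MOD 2] := by
  have h1 : ((Nat.digits b a).map (· ^ 2)).sum ≡ (Nat.digits b a).sum [MOD 2] := by
    induction Nat.digits b a with
    | nil => rfl
    | cons d l ih =>
      simp only [List.map_cons, List.sum_cons]
      have hd : d ^ 2 ≡ d [MOD 2] := by
        rcases Nat.even_or_odd d with h | h
        · simp [Nat.ModEq, Nat.pow_mod, Nat.even_iff.mp h]
        · simp [Nat.ModEq, Nat.pow_mod, Nat.odd_iff.mp h]
      exact Nat.ModEq.add hd ih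
  have h2 : a ≡ (Nat.digits b a).sum [MOD 2] :=
    Nat.modEq_digits_sum 2 b (Nat.odd_iff.mp hbo) a
  calc S c b a ≡ 0 + (Nat.digits b a).sum [MOD 2] :=
        Nat.ModEq.add (by simpa [Nat.ModEq, Nat.even_iff.mp hc]) h1
    _ ≡ a [MOD 2] := by simpa using h2.symm

lemma iter_parity (c b : ℕ) (hc : Even c) (hbo : Odd b) (k a : ℕ) :
    (S c b)^[k] a ≡ a [MOD 2] := by
  induction k with
  | zero => rfl
  | succ n ih =>
    rw [Function.iterate_succ_apply']
    exact (S_parity c b _ hc hbo).trans ih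

theorem stmt_15 (c b : ℕ) (hb : 2 ≤ b) (hc : Even c) (hbo : Odd b)
    (u : ℕ) (hu : inU c b u) :
    ¬ ∃ a : ℕ, 0 < a ∧ (∃ k : ℕ, (S c b)^[k] a = u) ∧
      (∃ k : ℕ, (S c b)^[k] (a + 1) = u) := by
  rintro ⟨a, _, ⟨k1, h1⟩, ⟨k2, h2⟩⟩
  have p1 : u ≡ a [MOD 2] := h1 ▸ iter_parity c b hc hbo k1 a
  have p2 : u ≡ a + 1 [MOD 2] := h2 ▸ iter_parity c b hc hbo k2 (a + 1)
  have h : a ≡ a + 1 [MOD 2] := p1.symm.trans p2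
  simp [Nat.ModEq] at h
  omega
end

section
/- Fix integers c ≥ 0 and b ≥ 2. Let F : ℤ⁺ → ℤ⁺ be a composition of a finite (possibly empty) sequence of the functions S_{[c,b]} and I, where I(t) = t + 1. If T is a finite set of positive integers such that the image F(T) is [c,b]-cycle-good, then T is [c,b]-cycle-good. -/
/-- A finite set `T` of positive integers is `[c,b]`-cycle-good if for each cycle of
`S_{[c,b]}` (the orbit of a positive periodic point `u`), there exist `n, k ≥ 1` such
that `S_{[c,b]}^k (t + n)` lies in that cycle for all `t ∈ T`. -/
def CycleGood (c b : ℕ) (T : Finset ℕ) : Prop :=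
  ∀ u, 0 < u → (∃ m, 0 < m ∧ (S c b)^[m] u = u) →
    ∃ n k : ℕ, 0 < n ∧ 0 < k ∧ ∀ t ∈ T, ∃ j : ℕ, (S c b)^[k] (t + n) = (S c b)^[j] u

/-- digit square sum -/
def dsq (b a : ℕ) : ℕ := ((Nat.digits b a).map (· ^ 2)).sum

lemma exists_dsq_eq (b : ℕ) (hb : 2 ≤ b) (n : ℕ) (hn : 0 < n) :
    ∃ m, 0 < m ∧ dsq b m = n := by
  induction n with
  | zero => omega
  | succ n ih =>
    rcases Nat.eq_zero_or_pos n with rfl | hn'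
    · refine ⟨1, one_pos, ?_⟩
      simp [dsq, Nat.digits_def' (by omega : 1 < b) one_pos, Nat.mod_eq_of_lt (by omega : 1 < b),
        Nat.div_eq_of_lt (by omega : 1 < b)]
    · obtain ⟨m, hm, hdsq⟩ := ih hn'
      refine ⟨1 + m * b, by positivity, ?_⟩
      have h1 : (1 + m * b) % b = 1 := by
        rw [Nat.add_mul_mod_self_right]; exact Nat.mod_eq_of_lt (by omega)
      have h2 : (1 + m * b) / b = m := by
        rw [Nat.add_mul_div_right _ _ (by omega : 0 < b), Nat.div_eq_of_lt (by omega)]; omega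
      rw [dsq, Nat.digits_def' (by omega : 1 < b) (by positivity), h1, h2]
      simp only [List.map_cons, List.sum_cons, one_pow]; rw [show ((Nat.digits b m).map (· ^ 2)).sum = dsq b m from rfl, hdsq]; omega

lemma S_shift (c b : ℕ) (hb : 2 ≤ b) (t m N : ℕ) (hm : 0 < m)
    (hN : (Nat.digits b t).length ≤ N) :
    S c b (t + b ^ N * m) = S c b t + dsq b m := by
  obtain ⟨k, rfl⟩ := Nat.exists_eq_add_of_le hN
  rw [S, ← Nat.digits_append_zeroes_append_digits (by omega : 1 < b) hm]
  simp [S, dsq, List.map_replicate]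
  ring

lemma key (c b : ℕ) (hb : 2 ≤ b) (f : ℕ → ℕ) (hf : f = S c b ∨ f = (· + 1))
    (T : Finset ℕ) (h : CycleGood c b (T.image f)) : CycleGood c b T := by
  intro u hu hcyc
  obtain ⟨n, k, hn, hk, hmem⟩ := h u hu hcyc
  rcases hf with rfl | rfl
  · -- f = S c b
    obtain ⟨m, hm, hsq⟩ := exists_dsq_eq b hb n hn
    set N := T.sup (fun t => (Nat.digits b t).length) with hNdef
    refine ⟨b ^ N * m, k + 1, by positivity, by omega, fun t ht => ?_⟩
    obtain ⟨j, hj⟩ := hmem (S c b t) (Finset.mem_image_of_mem _ ht)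
    refine ⟨j, ?_⟩
    have hshift : S c b (t + b ^ N * m) = S c b t + n := by
      rw [S_shift c b hb t m N hm (Finset.le_sup (f := fun t => (Nat.digits b t).length) ht), hsq]
    rw [Function.iterate_succ_apply, hshift, hj]
  · -- f = (· + 1)
    refine ⟨n + 1, k, by omega, hk, fun t ht => ?_⟩
    obtain ⟨j, hj⟩ := hmem (t + 1) (Finset.mem_image_of_mem _ ht)
    exact ⟨j, by rw [show t + (n + 1) = t + 1 + n by omega]; exact hj⟩

theorem stmt_16 (c b : ℕ) (hb : 2 ≤ b) (F : ℕ → ℕ)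
    (hF : ∃ L : List (ℕ → ℕ), (∀ f ∈ L, f = S c b ∨ f = (· + 1)) ∧
      F = L.foldr (· ∘ ·) id)
    (T : Finset ℕ) (hpos : ∀ t ∈ T, 0 < t)
    (h : CycleGood c b (T.image F)) : CycleGood c b T := by
  obtain ⟨L, hL, rfl⟩ := hF
  induction L with
  | nil => simpa [Finset.image_id] using h
  | cons f L ih =>
    apply ih (fun g hg => hL g (List.mem_cons_of_mem _ hg))
    apply key c b hb f (hL f List.mem_cons_self)
    have : (T.image (L.foldr (· ∘ ·) id)).image f
        = T.image ((f :: L).foldr (· ∘ ·) id) := by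
      rw [Finset.image_image]; rfl
    rw [this]; exact h
end
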